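/- arXiv:2305.12981 — 6 statements merged into one kernel-verified Lean document; each statement's English description precedes it below -/
import Mathlib

section
/- The function x ↦ log(1 + x + x²) + x²/6 is convex on R, and ψ(x) ≤ log(1 + x + x²) for every x ∈ R, where ψ is the truncation function. -/
open MeasureTheory ProbabilityTheory Real
open scoped ENNReal NNReal

noncomputable section

/-- The diagonal part of a matrix: off-diagonal entries set to zero. -/
def diagPart {d : ℕ} (M : Matrix (Fin d) (Fin d) ℝ) : Matrix (Fin d) (Fin d) ℝ :=
  Matrix.of fun i j => if i = j then M i j else 0

/-- The off-diagonal part of a matrix. -/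
def offPart {d : ℕ} (M : Matrix (Fin d) (Fin d) ℝ) : Matrix (Fin d) (Fin d) ℝ :=
  M - diagPart M

/-- Outer product `x xᵀ`. -/
def outer {d : ℕ} (x : Fin d → ℝ) : Matrix (Fin d) (Fin d) ℝ :=
  Matrix.of fun i j => x i * x j

/-- Bilinear form `uᵀ M w`. -/
def bilinForm {d : ℕ} (M : Matrix (Fin d) (Fin d) ℝ) (u w : Fin d → ℝ) : ℝ :=
  ∑ i, ∑ j, u i * M i j * w j

/-- Quadratic form `vᵀ M v`. -/
def quadForm {d : ℕ} (M : Matrix (Fin d) (Fin d) ℝ) (v : Fin d → ℝ) : ℝ :=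
  bilinForm M v v

/-- Operator (spectral) norm of a matrix acting on Euclidean space. -/
def opNorm {d : ℕ} (M : Matrix (Fin d) (Fin d) ℝ) : ℝ :=
  ‖LinearMap.toContinuousLinearMap (Matrix.toEuclideanLin M)‖

/-- Effective rank `tr Σ / ‖Σ‖`. -/
def effRank {d : ℕ} (S : Matrix (Fin d) (Fin d) ℝ) : ℝ :=
  S.trace / opNorm S

/-- The unit sphere `S^{d-1}` in `ℝ^d`. -/
def unitSphere (d : ℕ) : Set (Fin d → ℝ) := {v | ∑ i, (v i) ^ 2 = 1}

/-- The truncation function: `ψ(x) = x` on `[-1,1]` and `ψ(x) = sign x` for `|x| > 1`. -/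
def psi (x : ℝ) : ℝ := max (-1) (min 1 x)

variable {Ω : Type*} [MeasureSpace Ω]

/-- `X` has zero mean (coordinatewise integrable with zero integral). -/
def ZeroMean {d : ℕ} (X : Ω → Fin d → ℝ) : Prop :=
  ∀ i, Integrable (fun ω => X ω i) ∧ ∫ ω, X ω i = 0

/-- `S` is the covariance matrix of the (zero-mean) random vector `X`. -/
def IsCov {d : ℕ} (X : Ω → Fin d → ℝ) (S : Matrix (Fin d) (Fin d) ℝ) : Prop :=
  ∀ i j, S i j = ∫ ω, X ω i * X ω j

/-- All fourth moments of the coordinates of `X` are finite. -/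
def FiniteFourthMoments {d : ℕ} (X : Ω → Fin d → ℝ) : Prop :=
  ∀ i j k l : Fin d, Integrable (fun ω => X ω i * X ω j * X ω k * X ω l)

/-- The `L₄-L₂` moment equivalence (hypercontractivity) with constant `κ`:
for every unit vector `v`, `(E|⟨X,v⟩|⁴)^{1/4} ≤ κ (E|⟨X,v⟩|²)^{1/2}`. -/
def L4L2 {d : ℕ} (X : Ω → Fin d → ℝ) (κ : ℝ) : Prop :=
  ∀ v ∈ unitSphere d,
    (∫ ω, |∑ i, X ω i * v i| ^ 4) ^ ((1 : ℝ)/4) ≤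
      κ * (∫ ω, |∑ i, X ω i * v i| ^ 2) ^ ((1 : ℝ)/2)

/-- `ε : Ω → Fin d → ℝ` is a vector of i.i.d. Bernoulli(p) {0,1}-valued random variables. -/
def IsBernoulliMask {d : ℕ} (p : ℝ) (ε : Ω → Fin d → ℝ) : Prop :=
  (∀ ω i, ε ω i = 0 ∨ ε ω i = 1) ∧
  (∀ i, Measurable fun ω => ε ω i) ∧
  (∀ i, (ℙ : Measure Ω) {ω | ε ω i = 1} = ENNReal.ofReal p) ∧
  iIndepFun (fun i ω => ε ω i) ℙ

/-- `Y = X ⊙ p`: the `p`-sparsification of `X` by the Bernoulli mask `ε`,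
with `ε` independent of `X`. -/
def IsSparsified {d : ℕ} (p : ℝ) (X ε Y : Ω → Fin d → ℝ) : Prop :=
  IsBernoulliMask p ε ∧ Measurable X ∧ IndepFun X ε ∧ ∀ ω i, Y ω i = X ω i * ε ω i

/-- `Y 0, ..., Y (N-1)` are i.i.d. copies of the `p`-sparsification of `X`. -/
def IsIIDSparsifiedSample {d N : ℕ} (p : ℝ) (X : Ω → Fin d → ℝ)
    (Y : Fin N → Ω → Fin d → ℝ) : Prop :=
  (∀ j, Measurable (Y j)) ∧
  iIndepFun Y ℙ ∧
  ∃ ε Y₀, Measurable Y₀ ∧ IsSparsified p X ε Y₀ ∧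
    ∀ j, Measure.map (Y j) ℙ = Measure.map Y₀ ℙ

/-- `θ` is a Gaussian vector with mean `m` and covariance `σ2 • I` (independent
Gaussian coordinates). -/
def IsGaussianVecIndep {d : ℕ} (m : Fin d → ℝ) (σ2 : ℝ≥0) (θ : Ω → Fin d → ℝ) : Prop :=
  (∀ i, Measurable fun ω => θ ω i) ∧
  (∀ i, Measure.map (fun ω => θ ω i) ℙ = gaussianReal (m i) σ2) ∧
  iIndepFun (fun i ω => θ ω i) ℙ

/-- `G` is a centered Gaussian vector with covariance matrix `S`: every linear marginal
`⟨G, v⟩` is a real Gaussian with mean `0` and variance `vᵀ S v`. -/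
def IsCenteredGaussianVector {d : ℕ} (S : Matrix (Fin d) (Fin d) ℝ) (G : Ω → Fin d → ℝ) : Prop :=
  Measurable G ∧
  ∀ v : Fin d → ℝ, Measure.map (fun ω => ∑ i, G ω i * v i) ℙ =
    gaussianReal 0 (quadForm S v).toNNReal

end


lemma aux_qpos (x : ℝ) : 0 < 1 + x + x ^ 2 := by nlinarith [sq_nonneg (x + 1/2)]

lemma aux_hd1 (x : ℝ) : HasDerivAt (fun x : ℝ => Real.log (1 + x + x ^ 2) + x ^ 2 / 6)
    ((1 + 2*x) / (1 + x + x ^ 2) + x / 3) x := by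
  have hq : HasDerivAt (fun x : ℝ => 1 + x + x ^ 2) (1 + 2*x) x := by
    have := ((hasDerivAt_id x).const_add 1).add ((hasDerivAt_pow 2 x)); simp at this; exact this
  have h1 := (hq.log (aux_qpos x).ne')
  have h2 : HasDerivAt (fun x : ℝ => x ^ 2 / 6) (x / 3) x := by
    have := (hasDerivAt_pow 2 x).div_const 6
    exact this.congr_deriv (by ring)
  exact h1.add h2

lemma aux_hd2 (x : ℝ) : HasDerivAt (fun x : ℝ => (1 + 2*x) / (1 + x + x ^ 2) + x / 3)
    ((1 - 2*x - 2*x^2) / (1 + x + x ^ 2)^2 + 1/3) x := by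
  have hq : HasDerivAt (fun x : ℝ => 1 + x + x ^ 2) (1 + 2*x) x := by
    have := ((hasDerivAt_id x).const_add 1).add ((hasDerivAt_pow 2 x)); simp at this; exact this
  have hn : HasDerivAt (fun x : ℝ => 1 + 2*x) 2 x := by
    simpa using ((hasDerivAt_id x).const_mul 2).const_add 1
  have h1 := hn.div hq (aux_qpos x).ne'
  have h2 : HasDerivAt (fun x : ℝ => x / 3) (1/3 : ℝ) x := (hasDerivAt_id x).div_const 3
  refine (h1.add h2).congr_deriv ?_
  field_simp
  ring

/-- The function `x ↦ log(1 + x + x²) + x²/6` is convex on `ℝ`, and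
`ψ(x) ≤ log(1 + x + x²)` for every real `x`. -/
theorem statement_5 :
    ConvexOn ℝ Set.univ (fun x : ℝ => Real.log (1 + x + x ^ 2) + x ^ 2 / 6) ∧
    ∀ x : ℝ, psi x ≤ Real.log (1 + x + x ^ 2) := by
  constructor
  · apply convexOn_of_hasDerivWithinAt2_nonneg convex_univ
      (f' := fun x => (1 + 2*x) / (1 + x + x ^ 2) + x / 3)
      (f'' := fun x => (1 - 2*x - 2*x^2) / (1 + x + x ^ 2)^2 + 1/3)
    · exact fun x _ => ((aux_hd1 x).continuousAt).continuousWithinAt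
    · exact fun x _ => (aux_hd1 x).hasDerivWithinAt
    · exact fun x _ => (aux_hd2 x).hasDerivWithinAt
    · intro x _
      have hq := aux_qpos x
      rw [div_add' _ _ _ (by positivity), le_div_iff₀ (by positivity)]
      nlinarith [sq_nonneg (x^2 + x - 2)]
  · intro x
    have hq := aux_qpos x
    rcases le_total x (-1) with h | h
    · have hpsi : psi x = -1 := by
        unfold psi; rw [min_eq_right (by linarith), max_eq_left (by linarith)]
      rw [hpsi]
      have h1 : (1:ℝ) ≤ 1 + x + x ^ 2 := by nlinarith
      have := Real.log_nonneg h1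
      linarith
    · rcases le_total 1 x with h2 | h2
      · have hpsi : psi x = 1 := by
          unfold psi; rw [min_eq_left h2, max_eq_right (by linarith)]
        rw [hpsi, Real.le_log_iff_exp_le hq]
        have := Real.exp_one_lt_d9
        nlinarith
      · have hpsi : psi x = x := by
          unfold psi; rw [min_eq_right h2, max_eq_right h]
        rw [hpsi, Real.le_log_iff_exp_le hq]
        have hb := Real.abs_exp_sub_one_sub_id_le (x := x) (abs_le.2 ⟨h, h2⟩)
        have := abs_le.1 hb
        linarith [this.2]
end

section
/- Let X be a zero-mean random vector in R^d with covariance matrix Σ satisfying the L4-L2 moment equivalence with constant κ, let p ∈ (0,1], and let Y = X ⊙ p be the p-sparsified vector. Then for every unit vector v ∈ S^{d−1}, E (vᵀ Diag(Y⊗Y) v)² ≤ 2 p κ⁴ ‖Diag(Σ)‖², where ‖·‖ is the operator norm. -/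
open MeasureTheory ProbabilityTheory Real
open scoped ENNReal NNReal

lemma diag_le_opNorm {d : ℕ} (M : Matrix (Fin d) (Fin d) ℝ) (i : Fin d) :
    |M i i| ≤ opNorm M := by
  set L := LinearMap.toContinuousLinearMap (Matrix.toEuclideanLin M)
  have he : ‖(EuclideanSpace.single i (1:ℝ))‖ = 1 := by
    simp [EuclideanSpace.norm_single]
  have h1 : ‖L (EuclideanSpace.single i (1:ℝ))‖ ≤ opNorm M := by
    calc ‖L (EuclideanSpace.single i (1:ℝ))‖ ≤ ‖L‖ * ‖(EuclideanSpace.single i (1:ℝ))‖ :=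
      L.le_opNorm _
    _ = opNorm M := by rw [he, mul_one]; rfl
  refine le_trans ?_ h1
  have happ : L (EuclideanSpace.single i (1:ℝ)) =
      (WithLp.equiv 2 (Fin d → ℝ)).symm (M.mulVec (Pi.single i 1)) := by
    show Matrix.toEuclideanLin M _ = _
    rw [Matrix.toEuclideanLin_apply]
    congr 1
  have hcoord : |(M.mulVec (Pi.single i (1:ℝ))) i| ≤ ‖L (EuclideanSpace.single i (1:ℝ))‖ := by
    rw [happ, EuclideanSpace.norm_eq]
    have : |(M.mulVec (Pi.single i (1:ℝ))) i| = Real.sqrt (((M.mulVec (Pi.single i (1:ℝ))) i)^2) := by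
      rw [Real.sqrt_sq_eq_abs]
    rw [this]
    apply Real.sqrt_le_sqrt
    have := Finset.single_le_sum (f := fun j => ‖((WithLp.equiv 2 (Fin d → ℝ)).symm (M.mulVec (Pi.single i 1)) : EuclideanSpace ℝ (Fin d)) j‖^2) (fun j _ => by positivity) (Finset.mem_univ i)
    simpa [sq_abs] using this
  refine le_trans ?_ hcoord
  simp [Matrix.mulVec_single]

lemma rpow_quarter_le {A B κ : ℝ} (hA : 0 ≤ A) (hB : 0 ≤ B) (hκ : 0 ≤ κ)
    (h : A ^ ((1:ℝ)/4) ≤ κ * B ^ ((1:ℝ)/2)) : A ≤ κ ^ 4 * B ^ 2 := by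
  have h4 : (A ^ ((1:ℝ)/4)) ^ (4:ℕ) ≤ (κ * B ^ ((1:ℝ)/2)) ^ (4:ℕ) :=
    pow_le_pow_left₀ (Real.rpow_nonneg hA _) h 4
  have hL : (A ^ ((1:ℝ)/4)) ^ (4:ℕ) = A := by
    rw [← Real.rpow_natCast (A ^ ((1:ℝ)/4)) 4, ← Real.rpow_mul hA]
    norm_num
  have hR : (B ^ ((1:ℝ)/2)) ^ (4:ℕ) = B ^ 2 := by
    rw [← Real.rpow_natCast (B ^ ((1:ℝ)/2)) 4, ← Real.rpow_mul hB,
      show (1:ℝ)/2 * (4:ℕ) = ((2:ℕ):ℝ) by norm_num, Real.rpow_natCast]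
  rw [hL, mul_pow, hR] at h4
  exact h4

/-- If `X` is zero-mean with covariance `Σ` satisfying `L₄-L₂` with constant `κ`,
`p ∈ (0,1]` and `Y = X ⊙ p`, then for every unit vector `v`,
`E (vᵀ Diag(Y⊗Y) v)² ≤ 2 p κ⁴ ‖Diag(Σ)‖²`. -/
theorem statement_6 {Ω : Type*} [MeasureSpace Ω] [IsProbabilityMeasure (ℙ : Measure Ω)]
    {d : ℕ} (X ε Y : Ω → Fin d → ℝ) (S : Matrix (Fin d) (Fin d) ℝ) (κ p : ℝ)
    (hmean : ZeroMean X) (hcov : IsCov X S) (hmom : FiniteFourthMoments X)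
    (hκ : 1 ≤ κ) (hL : L4L2 X κ) (hp : p ∈ Set.Ioc (0 : ℝ) 1)
    (hY : IsSparsified p X ε Y) :
    ∀ v ∈ unitSphere d,
      (∫ ω, (quadForm (diagPart (outer (Y ω))) v) ^ 2) ≤
        2 * p * κ ^ 4 * (opNorm (diagPart S)) ^ 2 := by
  
  obtain ⟨⟨hε01, hεmeas, hεP, _⟩, hXmeas, hindep, hYdef⟩ := hY
  obtain ⟨hp0, hp1⟩ := hp
  intro v hv
  have hv' : ∑ i, (v i)^2 = 1 := hv
  have hXi : ∀ i, Measurable fun ω => X ω i := fun i => (measurable_pi_apply i).comp hXmeas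
  have hε0le : ∀ ω i, 0 ≤ ε ω i := fun ω i => by rcases hε01 ω i with h|h <;> rw [h] <;> norm_num
  have hεle1 : ∀ ω i, ε ω i ≤ 1 := fun ω i => by rcases hε01 ω i with h|h <;> rw [h] <;> norm_num
  have hε2 : ∀ ω i, ε ω i * ε ω i = ε ω i := fun ω i => by
    rcases hε01 ω i with h|h <;> rw [h] <;> ring
  set B := opNorm (diagPart S) with hBdef
  have hB0 : 0 ≤ B := norm_nonneg _
  have hSdiag : ∀ i, S i i = ∫ ω, (X ω i)^2 := by
    intro i; rw [hcov i i]; congr 1; funext ω; ring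
  have hS0 : ∀ i, 0 ≤ S i i := fun i => by
    rw [hSdiag i]; exact integral_nonneg (fun ω => sq_nonneg _)
  have hSB : ∀ i, S i i ≤ B := fun i => by
    have h1 := diag_le_opNorm (diagPart S) i
    have h2 : diagPart S i i = S i i := by simp [diagPart]
    rw [h2] at h1
    exact (abs_le.mp h1).2
  have hκ0 : (0:ℝ) ≤ κ := le_trans zero_le_one hκ
  have hInt4 : ∀ i j : Fin d, Integrable (fun ω => (X ω i)^2 * (X ω j)^2) := by
    intro i j
    have he : (fun ω => (X ω i)^2 * (X ω j)^2) = fun ω => X ω i * X ω i * X ω j * X ω j := by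
      funext ω; ring
    rw [he]; exact hmom i i j j
  have hIntq : ∀ i : Fin d, Integrable (fun ω => (X ω i)^4) := by
    intro i
    have he : (fun ω => (X ω i)^4) = fun ω => (X ω i)^2 * (X ω i)^2 := by funext ω; ring
    rw [he]; exact hInt4 i i
  have hq : ∀ i, ∫ ω, (X ω i)^4 ≤ κ^4 * (S i i)^2 := by
    intro i
    set e : Fin d → ℝ := Pi.single i (1:ℝ) with hedef
    have hmem : e ∈ unitSphere d := by
      simp [unitSphere, hedef, Pi.single_apply, Finset.sum_ite_eq']
    have hL' := hL _ hmem
    have hsum : ∀ ω, ∑ j, X ω j * e j = X ω i := by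
      intro ω; simp [hedef, Pi.single_apply]
    simp only [hsum] at hL'
    have h4 : ∀ ω, |X ω i|^4 = (X ω i)^4 := fun ω => (by decide : Even 4).pow_abs _
    have h2 : ∀ ω, |X ω i|^2 = (X ω i)^2 := fun ω => (by decide : Even 2).pow_abs _
    simp only [h4, h2] at hL'
    have := rpow_quarter_le (integral_nonneg fun ω => by positivity)
      (integral_nonneg fun ω => sq_nonneg _) hκ0 hL'
    rwa [← hSdiag i] at this
  have hm : ∀ i j, ∫ ω, (X ω i)^2 * (X ω j)^2 ≤ κ^4 * B^2 := by
    intro i j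
    have hk4 : (0:ℝ) ≤ κ^4 := by positivity
    calc ∫ ω, (X ω i)^2 * (X ω j)^2
        ≤ ∫ ω, ((X ω i)^4 + (X ω j)^4)/2 := by
          refine integral_mono (hInt4 i j) (((hIntq i).add (hIntq j)).div_const 2) ?_
          intro ω
          nlinarith [sq_nonneg ((X ω i)^2 - (X ω j)^2)]
      _ = ((∫ ω, (X ω i)^4) + ∫ ω, (X ω j)^4)/2 := by
          rw [integral_div, integral_add (hIntq i) (hIntq j)]
      _ ≤ (κ^4 * (S i i)^2 + κ^4 * (S j j)^2)/2 := by
          have := hq i; have := hq j; linarith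
      _ ≤ κ^4 * B^2 := by
          have hii : S i i ^ 2 ≤ B ^ 2 := pow_le_pow_left₀ (hS0 i) (hSB i) 2
          have hjj : S j j ^ 2 ≤ B ^ 2 := pow_le_pow_left₀ (hS0 j) (hSB j) 2
          nlinarith [hk4]
  -- the key functions
  set R : Ω → ℝ := fun ω => ∑ i, (v i)^2 * (X ω i)^2 with hRdef
  have hQF : ∀ ω, quadForm (diagPart (outer (Y ω))) v
      = ∑ i, (v i)^2 * (X ω i)^2 * ε ω i := by
    intro ω
    unfold quadForm bilinForm diagPart outer
    simp only [Matrix.of_apply, mul_ite, ite_mul, mul_zero, zero_mul, Finset.sum_ite_eq,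
      Finset.mem_univ, if_true]
    refine Finset.sum_congr rfl fun i _ => ?_
    have h : v i * (X ω i * ε ω i * (X ω i * ε ω i)) * v i
        = (v i)^2 * (X ω i)^2 * (ε ω i * ε ω i) := by ring
    rw [hYdef ω i, h, hε2]
  have hexp : (fun ω => R ω ^ 2)
      = fun ω => ∑ i, ∑ j, ((v i)^2 * (v j)^2) * ((X ω i)^2 * (X ω j)^2) := by
    funext ω
    rw [sq, hRdef, Finset.sum_mul_sum]
    refine Finset.sum_congr rfl fun i _ => Finset.sum_congr rfl fun j _ => by ring
  have hIntR2 : Integrable (fun ω => R ω ^ 2) := by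
    rw [hexp]
    exact integrable_finset_sum _ fun i _ =>
      integrable_finset_sum _ fun j _ => (hInt4 i j).const_mul _
  have hfInt : ∀ i, Integrable (fun ω => (v i)^2 * (X ω i)^2 * R ω) := by
    intro i
    have he : (fun ω => (v i)^2 * (X ω i)^2 * R ω)
        = fun ω => ∑ j, ((v i)^2 * (v j)^2) * ((X ω i)^2 * (X ω j)^2) := by
      funext ω
      rw [hRdef, Finset.mul_sum]
      exact Finset.sum_congr rfl fun j _ => by ring
    rw [he]
    exact integrable_finset_sum _ fun j _ => (hInt4 i j).const_mul _
  have hεInt : ∀ i, Integrable (fun ω => ε ω i) := by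
    intro i
    refine Integrable.mono' (integrable_const 1) (hεmeas i).aestronglyMeasurable ?_
    filter_upwards with ω
    rw [Real.norm_eq_abs, abs_of_nonneg (hε0le ω i)]
    exact hεle1 ω i
  have hgInt : ∀ i, Integrable (fun ω => ((v i)^2 * (X ω i)^2 * R ω) * ε ω i) := by
    intro i
    have hre : (fun ω => ((v i)^2 * (X ω i)^2 * R ω) * ε ω i)
        = fun ω => ε ω i * ((v i)^2 * (X ω i)^2 * R ω) := funext fun ω => mul_comm _ _
    rw [hre]
    refine (hfInt i).bdd_mul (c := 1) (hεmeas i).aestronglyMeasurable ?_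
    filter_upwards with ω
    rw [Real.norm_eq_abs, abs_of_nonneg (hε0le ω i)]
    exact hεle1 ω i
  have hQle : ∀ ω, (∑ i, (v i)^2 * (X ω i)^2 * ε ω i) ≤ R ω := by
    intro ω
    refine Finset.sum_le_sum fun i _ => ?_
    have h0 : (0:ℝ) ≤ (v i)^2 * (X ω i)^2 := by positivity
    nlinarith [hεle1 ω i, hε0le ω i]
  have hQ0 : ∀ ω, (0:ℝ) ≤ ∑ i, (v i)^2 * (X ω i)^2 * ε ω i := by
    intro ω
    refine Finset.sum_nonneg fun i _ => ?_
    have := hε0le ω i; positivity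
  have hR0 : ∀ ω, (0:ℝ) ≤ R ω := fun ω => Finset.sum_nonneg fun i _ => by positivity
  have hpt : ∀ ω, (quadForm (diagPart (outer (Y ω))) v)^2
      ≤ ∑ i, ((v i)^2 * (X ω i)^2 * R ω) * ε ω i := by
    intro ω
    rw [hQF ω]
    calc (∑ i, (v i)^2 * (X ω i)^2 * ε ω i)^2
        ≤ (∑ i, (v i)^2 * (X ω i)^2 * ε ω i) * R ω := by
          rw [sq]
          exact mul_le_mul_of_nonneg_left (hQle ω) (hQ0 ω)
      _ = ∑ i, ((v i)^2 * (X ω i)^2 * R ω) * ε ω i := by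
          rw [Finset.sum_mul]
          exact Finset.sum_congr rfl fun i _ => by ring
  have hQmeas : Measurable (fun ω => ∑ i, (v i)^2 * (X ω i)^2 * ε ω i) :=
    Finset.measurable_sum _ fun i _ => (((hXi i).pow_const 2).const_mul _).mul (hεmeas i)
  have hQ2int : Integrable (fun ω => (quadForm (diagPart (outer (Y ω))) v)^2) := by
    have hfun : (fun ω => (quadForm (diagPart (outer (Y ω))) v)^2)
        = fun ω => (∑ i, (v i)^2 * (X ω i)^2 * ε ω i)^2 := funext fun ω => by rw [hQF ω]
    rw [hfun]
    refine Integrable.mono' hIntR2 (hQmeas.pow_const 2).aestronglyMeasurable ?_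
    filter_upwards with ω
    rw [Real.norm_eq_abs, abs_of_nonneg (sq_nonneg _)]
    exact pow_le_pow_left₀ (hQ0 ω) (hQle ω) 2
  have hεval : ∀ i, ∫ ω, ε ω i = p := by
    intro i
    have hset : MeasurableSet {ω | ε ω i = 1} := (hεmeas i) (measurableSet_singleton 1)
    have hind : (fun ω => ε ω i) = Set.indicator {ω | ε ω i = 1} (fun _ => (1:ℝ)) := by
      funext ω
      by_cases h : ε ω i = 1
      · simp [Set.indicator_apply, Set.mem_setOf_eq, h]
      · have h0 : ε ω i = 0 := (hε01 ω i).resolve_right h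
        simp [Set.indicator_apply, Set.mem_setOf_eq, h, h0]
    rw [hind, integral_indicator_const (1:ℝ) hset, smul_eq_mul, mul_one, measureReal_def, hεP i,
      ENNReal.toReal_ofReal hp0.le]
  have hmul : ∀ i, ∫ ω, ((v i)^2 * (X ω i)^2 * R ω) * ε ω i
      = (∫ ω, (v i)^2 * (X ω i)^2 * R ω) * ∫ ω, ε ω i := by
    intro i
    have hF : Measurable (fun x : Fin d → ℝ =>
        (v i)^2 * (x i)^2 * ∑ j, (v j)^2 * (x j)^2) :=
      (((measurable_pi_apply i).pow_const 2).const_mul _).mul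
        (Finset.measurable_sum _ fun j _ => ((measurable_pi_apply j).pow_const 2).const_mul _)
    have hG : Measurable (fun x : Fin d → ℝ => x i) := measurable_pi_apply i
    have hIF := hindep.comp hF hG
    exact hIF.integral_mul_eq_mul_integral (hfInt i).aestronglyMeasurable (hεInt i).aestronglyMeasurable
  have hRsum : ∀ ω, ∑ i, (v i)^2 * (X ω i)^2 * R ω = R ω ^ 2 := by
    intro ω
    rw [sq, hRdef, ← Finset.sum_mul]
  have hR2bound : ∫ ω, R ω ^ 2 ≤ κ^4 * B^2 := by
    have hI : ∫ ω, R ω ^ 2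
        = ∑ i, ∑ j, ((v i)^2 * (v j)^2) * ∫ ω, (X ω i)^2 * (X ω j)^2 := by
      rw [hexp, integral_finset_sum _ (fun i _ =>
        integrable_finset_sum _ fun j _ => (hInt4 i j).const_mul _)]
      refine Finset.sum_congr rfl fun i _ => ?_
      rw [integral_finset_sum _ (fun j _ => (hInt4 i j).const_mul _)]
      exact Finset.sum_congr rfl fun j _ => integral_const_mul _ _
    rw [hI]
    calc ∑ i, ∑ j, ((v i)^2 * (v j)^2) * ∫ ω, (X ω i)^2 * (X ω j)^2
        ≤ ∑ i, ∑ j, ((v i)^2 * (v j)^2) * (κ^4 * B^2) := by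
          refine Finset.sum_le_sum fun i _ => Finset.sum_le_sum fun j _ => ?_
          exact mul_le_mul_of_nonneg_left (hm i j) (by positivity)
      _ = κ^4 * B^2 := by
          have h1 : ∀ i : Fin d, ∑ j, ((v i)^2 * (v j)^2) * (κ^4 * B^2)
              = (v i)^2 * (κ^4 * B^2) := by
            intro i
            have : ∀ j : Fin d, ((v i)^2 * (v j)^2) * (κ^4 * B^2)
                = (v i)^2 * ((v j)^2 * (κ^4 * B^2)) := fun j => by ring
            rw [Finset.sum_congr rfl fun j _ => this j, ← Finset.mul_sum,
              ← Finset.sum_mul, hv', one_mul]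
          rw [Finset.sum_congr rfl fun i _ => h1 i, ← Finset.sum_mul, hv', one_mul]
  calc ∫ ω, (quadForm (diagPart (outer (Y ω))) v)^2
      ≤ ∫ ω, ∑ i, ((v i)^2 * (X ω i)^2 * R ω) * ε ω i :=
        integral_mono hQ2int (integrable_finset_sum _ fun i _ => hgInt i) hpt
    _ = ∑ i, ∫ ω, ((v i)^2 * (X ω i)^2 * R ω) * ε ω i :=
        integral_finset_sum _ fun i _ => hgInt i
    _ = ∑ i, (∫ ω, (v i)^2 * (X ω i)^2 * R ω) * p := by
        refine Finset.sum_congr rfl fun i _ => ?_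
        rw [hmul i, hεval i]
    _ = p * ∫ ω, R ω ^ 2 := by
        rw [← Finset.sum_mul, mul_comm, ← integral_finset_sum _ (fun i _ => hfInt i)]
        congr 1
        refine integral_congr_ae (Filter.Eventually.of_forall fun ω => ?_)
        exact hRsum ω
    _ ≤ p * (κ^4 * B^2) := mul_le_mul_of_nonneg_left hR2bound hp0.le
    _ ≤ 2 * p * κ ^ 4 * B ^ 2 := by
        nlinarith [mul_nonneg (mul_nonneg hp0.le (pow_nonneg hκ0 4)) (sq_nonneg B)]
end

section
/- Let X be a zero-mean random vector in R^d with covariance matrix Σ satisfying the L4-L2 moment equivalence with constant κ, let p ∈ (0,1], and let Y = X ⊙ p be the p-sparsified vector. Then for every unit vector v ∈ S^{d−1}, E (vᵀ Off(Y⊗Y) v)² ≤ 4 p² κ⁴ ‖Σ‖², where ‖·‖ is the operator norm. -/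
open MeasureTheory ProbabilityTheory Real
open scoped ENNReal NNReal

section Helpers

open MeasureTheory ProbabilityTheory Real

variable {Ω : Type*} [MeasureSpace Ω] [IsProbabilityMeasure (ℙ : Measure Ω)]

theorem st7_eps_int {d : ℕ} {p : ℝ} (hp : 0 ≤ p) {ε : Ω → Fin d → ℝ}
    (h01 : ∀ ω i, ε ω i = 0 ∨ ε ω i = 1)
    (hmeas : ∀ i, Measurable fun ω => ε ω i)
    (hP : ∀ i, (ℙ : Measure Ω) {ω | ε ω i = 1} = ENNReal.ofReal p)
    (i : Fin d) : ∫ ω, ε ω i = p := by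
  have hset : MeasurableSet {ω | ε ω i = 1} := (hmeas i) (measurableSet_singleton 1)
  have heq : (fun ω => ε ω i) = Set.indicator {ω | ε ω i = 1} (1 : Ω → ℝ) := by
    funext ω
    rcases h01 ω i with h | h <;>
      simp [Set.indicator_apply, Set.mem_setOf_eq, h]
  rw [heq, MeasureTheory.integral_indicator_one hset, measureReal_def, hP i, ENNReal.toReal_ofReal hp]

theorem st7_eps_prod {d : ℕ} {p : ℝ} (hp : 0 ≤ p) {ε : Ω → Fin d → ℝ}
    (h01 : ∀ ω i, ε ω i = 0 ∨ ε ω i = 1)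
    (hmeas : ∀ i, Measurable fun ω => ε ω i)
    (hP : ∀ i, (ℙ : Measure Ω) {ω | ε ω i = 1} = ENNReal.ofReal p)
    (hind : iIndepFun (fun i ω => ε ω i) ℙ)
    (s : Finset (Fin d)) : ∫ ω, ∏ m ∈ s, ε ω m = p ^ s.card := by
  classical
  induction s using Finset.induction_on with
  | empty => simp
  | insert _ _ hns ih =>
      rename_i a s
      have hindep : IndepFun (∏ j ∈ s, (fun i ω => ε ω i) j) ((fun i ω => ε ω i) a) ℙ :=
        hind.indepFun_finset_prod_of_notMem hmeas hns
      have hmul := hindep.integral_mul_eq_mul_integral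
        (Finset.aestronglyMeasurable_prod _ fun j _ => (hmeas j).aestronglyMeasurable)
        (hmeas a).aestronglyMeasurable
      have e2 : (∏ j ∈ s, (fun i ω => ε ω i) j) = fun ω => ∏ m ∈ s, ε ω m :=
        funext fun ω => Finset.prod_apply ω s _
      have e1 : ((∏ j ∈ s, (fun i ω => ε ω i) j) * fun ω => ε ω a)
          = fun ω => (∏ m ∈ s, ε ω m) * ε ω a := by
        funext ω; simp [Finset.prod_apply]
      rw [e1, e2] at hmul
      rw [Finset.card_insert_of_notMem hns]
      calc ∫ ω, ∏ m ∈ insert a s, ε ω m = ∫ ω, (∏ m ∈ s, ε ω m) * ε ω a := by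
            congr 1; funext ω; rw [Finset.prod_insert hns]; ring
        _ = (∫ ω, ∏ m ∈ s, ε ω m) * ∫ ω, ε ω a := hmul
        _ = p ^ s.card * p := by rw [ih, st7_eps_int hp h01 hmeas hP]
        _ = p ^ (s.card + 1) := by ring

theorem st7_eps4 {d : ℕ} {p : ℝ} (hp : 0 ≤ p) {ε : Ω → Fin d → ℝ}
    (h01 : ∀ ω i, ε ω i = 0 ∨ ε ω i = 1)
    (hmeas : ∀ i, Measurable fun ω => ε ω i)
    (hP : ∀ i, (ℙ : Measure Ω) {ω | ε ω i = 1} = ENNReal.ofReal p)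
    (hind : iIndepFun (fun i ω => ε ω i) ℙ)
    {i j k l : Fin d} (hij : i ≠ j) (hkl : k ≠ l) :
    ∫ ω, ε ω i * ε ω j * ε ω k * ε ω l
      = p^2 * (if k = i ∨ k = j then 1 else p) * (if l = i ∨ l = j then 1 else p) := by
  classical
  have hpt : ∀ ω, ε ω i * ε ω j * ε ω k * ε ω l
      = ∏ m ∈ ({i, j, k, l} : Finset (Fin d)), ε ω m := by
    intro ω
    by_cases h0 : ε ω i = 0 ∨ ε ω j = 0 ∨ ε ω k = 0 ∨ ε ω l = 0
    · have hz : ∃ m ∈ ({i, j, k, l} : Finset (Fin d)), ε ω m = 0 := by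
        rcases h0 with h | h | h | h
        · exact ⟨i, by simp, h⟩
        · exact ⟨j, by simp, h⟩
        · exact ⟨k, by simp, h⟩
        · exact ⟨l, by simp, h⟩
      obtain ⟨m, hm, hm0⟩ := hz
      rw [Finset.prod_eq_zero hm hm0]
      rcases h0 with h | h | h | h <;> rw [h] <;> ring
    · push_neg at h0
      obtain ⟨hi1, hj1, hk1, hl1⟩ := h0
      have hi : ε ω i = 1 := (h01 ω i).resolve_left hi1
      have hj : ε ω j = 1 := (h01 ω j).resolve_left hj1
      have hk : ε ω k = 1 := (h01 ω k).resolve_left hk1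
      have hl : ε ω l = 1 := (h01 ω l).resolve_left hl1
      rw [hi, hj, hk, hl, Finset.prod_eq_one]
      · ring
      · intro m hm
        simp only [Finset.mem_insert, Finset.mem_singleton] at hm
        rcases hm with rfl | rfl | rfl | rfl <;> assumption
  rw [show (fun ω => ε ω i * ε ω j * ε ω k * ε ω l)
      = fun ω => ∏ m ∈ ({i, j, k, l} : Finset (Fin d)), ε ω m from funext hpt]
  rw [st7_eps_prod hp h01 hmeas hP hind]
  by_cases hk : k = i ∨ k = j <;> by_cases hl : l = i ∨ l = j
  · have hset : ({i, j, k, l} : Finset (Fin d)) = {i, j} := by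
      ext a; simp only [Finset.mem_insert, Finset.mem_singleton]
      constructor
      · rintro (rfl | rfl | rfl | rfl) <;> tauto
      · tauto
    rw [hset, if_pos hk, if_pos hl]
    rw [Finset.card_insert_of_notMem (by simp [hij]), Finset.card_singleton]
    ring
  · push_neg at hl
    have hset : ({i, j, k, l} : Finset (Fin d)) = {i, j, l} := by
      ext a; simp only [Finset.mem_insert, Finset.mem_singleton]
      constructor
      · rintro (rfl | rfl | rfl | rfl) <;> tauto
      · tauto
    rw [hset, if_pos hk, if_neg (by tauto)]
    have hc : ({i, j, l} : Finset (Fin d)).card = 3 := by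
      rw [Finset.card_insert_of_notMem (by simp [hij, Ne.symm hl.1]),
        Finset.card_insert_of_notMem (by simp [Ne.symm hl.2]), Finset.card_singleton]
    rw [hc]; ring
  · push_neg at hk
    have hset : ({i, j, k, l} : Finset (Fin d)) = {i, j, k} := by
      ext a; simp only [Finset.mem_insert, Finset.mem_singleton]
      constructor
      · rintro (rfl | rfl | rfl | rfl) <;> tauto
      · tauto
    rw [hset, if_neg (by tauto), if_pos hl]
    have hc : ({i, j, k} : Finset (Fin d)).card = 3 := by
      rw [Finset.card_insert_of_notMem (by simp [hij, Ne.symm hk.1]),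
        Finset.card_insert_of_notMem (by simp [Ne.symm hk.2]), Finset.card_singleton]
    rw [hc]; ring
  · push_neg at hk; push_neg at hl
    rw [if_neg (by tauto), if_neg (by tauto)]
    have hc : ({i, j, k, l} : Finset (Fin d)).card = 4 := by
      rw [Finset.card_insert_of_notMem (by simp [hij, Ne.symm hk.1, Ne.symm hl.1]),
        Finset.card_insert_of_notMem (by simp [Ne.symm hk.2, Ne.symm hl.2]),
        Finset.card_insert_of_notMem (by simp [hkl]), Finset.card_singleton]
    rw [hc]; ring

theorem st7_key_alg {d : ℕ} (p : ℝ) (b : Fin d → ℝ) :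
    (∑ i, ∑ j, ∑ k, ∑ l,
      (if i = j then (0:ℝ) else 1) * (if k = l then (0:ℝ) else 1) *
        (p^2 * (if k = i ∨ k = j then 1 else p) * (if l = i ∨ l = j then 1 else p)) *
        (b i * b j * (b k * b l)))
    = p^4 * ((∑ i, b i)^2 - ∑ i, (b i)^2)^2
      + 4*p^3*(1-p) * (∑ i, (b i)^2 * ((∑ j, b j) - b i)^2)
      + 2*p^2*(1-p)^2 * ((∑ i, (b i)^2)^2 - ∑ i, (b i)^4) := by
  classical
  have hA : ∀ h : Fin d → ℝ,
      ∑ k, ∑ l, (if k = l then (0:ℝ) else 1) * (h k * h l)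
        = (∑ k, h k)^2 - ∑ k, (h k)^2 := by
    intro h
    have step : ∀ k, ∑ l, (if k = l then (0:ℝ) else 1) * (h k * h l)
        = h k * (∑ l, h l) - (h k)^2 := by
      intro k
      calc ∑ l, (if k = l then (0:ℝ) else 1) * (h k * h l)
          = ∑ l, (h k * h l - if k = l then h k * h l else 0) := by
            apply Finset.sum_congr rfl; intro l _; split <;> ring
        _ = (∑ l, h k * h l) - ∑ l, (if k = l then h k * h l else 0) :=
            Finset.sum_sub_distrib _ _
        _ = h k * (∑ l, h l) - (h k)^2 := by
            rw [← Finset.mul_sum, Finset.sum_ite_eq]; simp [sq]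
    rw [Finset.sum_congr rfl fun k _ => step k, Finset.sum_sub_distrib,
      ← Finset.sum_mul, sq]
  have hsum4 : ∀ c1 c2 c3 c4 : ℝ,
      ∑ i, (c1 * b i + c2 * (b i)^2 + c3 * (b i)^3 + c4 * (b i)^4)
        = c1 * (∑ i, b i) + c2 * (∑ i, (b i)^2) + c3 * (∑ i, (b i)^3)
          + c4 * (∑ i, (b i)^4) := by
    intro c1 c2 c3 c4
    rw [Finset.sum_add_distrib, Finset.sum_add_distrib, Finset.sum_add_distrib,
      ← Finset.mul_sum, ← Finset.mul_sum, ← Finset.mul_sum, ← Finset.mul_sum]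
  set P1 := ∑ i, b i with hP1
  set P2 := ∑ i, (b i)^2 with hP2
  set P3 := ∑ i, (b i)^3 with hP3
  set P4 := ∑ i, (b i)^4 with hP4
  set H : Fin d → Fin d → ℝ := fun i j => b i * b j * p^2 *
      ((p*P1+(1-p)*(b i+b j))^2 - (p^2*P2+(1-p^2)*((b i)^2+(b j)^2))) with hH
  have hB : ∀ i j : Fin d, i ≠ j →
      ∑ k, (if k = i ∨ k = j then (1:ℝ) else p) * b k = p*P1 + (1-p)*(b i + b j) := by
    intro i j hij
    have e : ∀ k, (if k = i ∨ k = j then (1:ℝ) else p) * b k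
        = p * b k + (1-p) * ((if k = i then b k else 0) + (if k = j then b k else 0)) := by
      intro k
      by_cases hki : k = i
      · subst hki; simp [hij]; ring
      · by_cases hkj : k = j
        · subst hkj; simp [hki]; ring
        · simp [hki, hkj]
    rw [Finset.sum_congr rfl fun k _ => e k, Finset.sum_add_distrib, ← Finset.mul_sum,
      ← Finset.mul_sum, Finset.sum_add_distrib, Finset.sum_ite_eq', Finset.sum_ite_eq']
    simp [← hP1]
  have hC : ∀ i j : Fin d, i ≠ j →
      ∑ k, ((if k = i ∨ k = j then (1:ℝ) else p) * b k)^2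
        = p^2*P2 + (1-p^2)*((b i)^2 + (b j)^2) := by
    intro i j hij
    have e : ∀ k, ((if k = i ∨ k = j then (1:ℝ) else p) * b k)^2
        = p^2 * (b k)^2
          + (1-p^2) * ((if k = i then (b k)^2 else 0) + (if k = j then (b k)^2 else 0)) := by
      intro k
      by_cases hki : k = i
      · subst hki; simp [hij]; ring
      · by_cases hkj : k = j
        · subst hkj; simp [hki]; ring
        · simp [hki, hkj]; ring
    rw [Finset.sum_congr rfl fun k _ => e k, Finset.sum_add_distrib, ← Finset.mul_sum,
      ← Finset.mul_sum, Finset.sum_add_distrib, Finset.sum_ite_eq', Finset.sum_ite_eq']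
    simp [← hP2]
  have step1 : ∀ i j : Fin d,
      (∑ k, ∑ l, (if i = j then (0:ℝ) else 1) * (if k = l then (0:ℝ) else 1) *
        (p^2 * (if k = i ∨ k = j then 1 else p) * (if l = i ∨ l = j then 1 else p)) *
        (b i * b j * (b k * b l)))
      = if i = j then 0 else H i j := by
    intro i j
    by_cases hij : i = j
    · simp only [if_pos hij]
      apply Finset.sum_eq_zero; intro k _
      apply Finset.sum_eq_zero; intro l _
      ring
    · have e : ∀ k l : Fin d,
          (if i = j then (0:ℝ) else 1) * (if k = l then (0:ℝ) else 1) *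
            (p^2 * (if k = i ∨ k = j then 1 else p) * (if l = i ∨ l = j then 1 else p)) *
            (b i * b j * (b k * b l))
          = (b i * b j * p^2) * ((if k = l then (0:ℝ) else 1) *
              (((if k = i ∨ k = j then (1:ℝ) else p) * b k) *
               ((if l = i ∨ l = j then (1:ℝ) else p) * b l))) := by
        intro k l; rw [if_neg hij]; ring
      rw [Finset.sum_congr rfl fun k _ => Finset.sum_congr rfl fun l _ => e k l]
      simp only [← Finset.mul_sum]
      rw [hA (fun m => (if m = i ∨ m = j then (1:ℝ) else p) * b m), hB i j hij,
        hC i j hij, if_neg hij, hH]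
  rw [Finset.sum_congr rfl fun i _ => Finset.sum_congr rfl fun j _ => step1 i j]
  have step2 : ∀ i : Fin d, ∑ j, (if i = j then (0:ℝ) else H i j)
      = (∑ j, H i j) - H i i := by
    intro i
    calc ∑ j, (if i = j then (0:ℝ) else H i j)
        = ∑ j, (H i j - if i = j then H i j else 0) := by
          apply Finset.sum_congr rfl; intro j _; split <;> ring
      _ = (∑ j, H i j) - ∑ j, (if i = j then H i j else 0) := Finset.sum_sub_distrib _ _
      _ = (∑ j, H i j) - H i i := by rw [Finset.sum_ite_eq]; simp
  rw [Finset.sum_congr rfl fun i _ => step2 i]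
  have step3 : ∀ i : Fin d, ∑ j, H i j
      = (p^4*P1^2*b i - p^4*P2*b i + 2*p^3*P1*(b i)^2 - 2*p^4*P1*(b i)^2
          - 2*p^3*(b i)^3 + 2*p^4*(b i)^3) * P1
        + (2*p^3*P1*b i - 2*p^4*P1*b i + 2*p^2*(b i)^2 - 4*p^3*(b i)^2
            + 2*p^4*(b i)^2) * P2
        + (-2*p^3*b i + 2*p^4*b i) * P3 := by
    intro i
    have e : ∀ j, H i j
        = (p^4*P1^2*b i - p^4*P2*b i + 2*p^3*P1*(b i)^2 - 2*p^4*P1*(b i)^2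
            - 2*p^3*(b i)^3 + 2*p^4*(b i)^3) * b j
          + (2*p^3*P1*b i - 2*p^4*P1*b i + 2*p^2*(b i)^2 - 4*p^3*(b i)^2
              + 2*p^4*(b i)^2) * (b j)^2
          + (-2*p^3*b i + 2*p^4*b i) * (b j)^3
          + 0 * (b j)^4 := by
      intro j; rw [hH]; ring
    rw [Finset.sum_congr rfl fun j _ => e j, hsum4]
    ring
  have step4 : ∑ i, ((∑ j, H i j) - H i i)
      = (p^4*P1^3 + 2*p^3*P1*P2 - 3*p^4*P1*P2 - 2*p^3*P3 + 2*p^4*P3) * P1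
        + (2*p^3*P1^2 - 2*p^4*P1^2 + 2*p^2*P2 - 4*p^3*P2 + 2*p^4*P2
            - (p^4*P1^2 - p^4*P2)) * P2
        + (-2*p^3*P1 + 2*p^4*P1 - (4*p^3*P1 - 4*p^4*P1)) * P3
        + (-(2*p^2 - 8*p^3 + 6*p^4)) * P4 := by
    have e : ∀ i : Fin d, (∑ j, H i j) - H i i
        = (p^4*P1^3 + 2*p^3*P1*P2 - 3*p^4*P1*P2 - 2*p^3*P3 + 2*p^4*P3) * b i
          + (2*p^3*P1^2 - 2*p^4*P1^2 + 2*p^2*P2 - 4*p^3*P2 + 2*p^4*P2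
              - (p^4*P1^2 - p^4*P2)) * (b i)^2
          + (-2*p^3*P1 + 2*p^4*P1 - (4*p^3*P1 - 4*p^4*P1)) * (b i)^3
          + (-(2*p^2 - 8*p^3 + 6*p^4)) * (b i)^4 := by
      intro i; rw [step3 i, hH]; ring
    rw [Finset.sum_congr rfl fun i _ => e i, hsum4]
  rw [step4]
  have hR : ∑ i, (b i)^2 * (P1 - b i)^2
      = 0 * P1 + P1^2 * P2 + (-2*P1) * P3 + 1 * P4 := by
    have e : ∀ i : Fin d, (b i)^2 * (P1 - b i)^2
        = 0 * b i + P1^2 * (b i)^2 + (-2*P1) * (b i)^3 + 1 * (b i)^4 := by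
      intro i; ring
    rw [Finset.sum_congr rfl fun i _ => e i, hsum4]
  rw [hR]
  ring

theorem st7_sum_pow_four {d : ℕ} (g : Fin d → ℝ) :
    (∑ x, g x)^4 = ∑ i, ∑ k, ∑ j, ∑ l, (g i * g j) * (g k * g l) := by
  have h2 : (∑ x, g x)^2 = ∑ i, ∑ j, g i * g j := by
    rw [sq, Finset.sum_mul_sum]
  calc (∑ x, g x)^4 = ((∑ x, g x)^2)^2 := by ring
    _ = (∑ i, ∑ j, g i * g j)^2 := by rw [h2]
    _ = ∑ i, ∑ k, (∑ j, g i * g j) * (∑ l, g k * g l) := by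
        rw [sq, Finset.sum_mul_sum]
    _ = ∑ i, ∑ k, ∑ j, ∑ l, (g i * g j) * (g k * g l) := by
        apply Finset.sum_congr rfl; intro i _
        apply Finset.sum_congr rfl; intro k _
        rw [Finset.sum_mul_sum]

theorem st7_quad_le {d : ℕ} (S : Matrix (Fin d) (Fin d) ℝ) (u : Fin d → ℝ) :
    quadForm S u ≤ opNorm S * ∑ i, (u i)^2 := by
  set T := LinearMap.toContinuousLinearMap (Matrix.toEuclideanLin S) with hT
  set u' : EuclideanSpace ℝ (Fin d) := (WithLp.equiv 2 _).symm u with hu'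
  have h1 : quadForm S u = inner ℝ u' (T u') := by
    have hTu : T u' = (WithLp.equiv 2 (Fin d → ℝ)).symm (S.mulVec u) := by
      simp [T, u', Matrix.toEuclideanLin_apply]
    rw [hTu]
    simp only [quadForm, bilinForm, PiLp.inner_apply, RCLike.inner_apply, conj_trivial]
    simp [Matrix.mulVec, dotProduct, u', Finset.mul_sum]
    congr 1; ext i; rw [Finset.sum_mul]; congr 1; ext j; ring
  have h2 : inner ℝ u' (T u') ≤ ‖u'‖ * ‖T u'‖ := real_inner_le_norm _ _
  have h3 : ‖T u'‖ ≤ ‖T‖ * ‖u'‖ := T.le_opNorm u'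
  have h4 : ‖u'‖^2 = ∑ i, (u i)^2 := by
    rw [EuclideanSpace.norm_eq, Real.sq_sqrt (by positivity)]
    simp [u', sq_abs]
  have : quadForm S u ≤ ‖T‖ * ‖u'‖^2 := by
    rw [h1]
    nlinarith [norm_nonneg u', norm_nonneg (T u'), norm_nonneg T]
  rw [h4] at this
  exact this

theorem st7_rpow_quarter {a : ℝ} (ha : 0 ≤ a) : (a ^ ((1:ℝ)/4))^(4:ℕ) = a := by
  rw [← Real.rpow_natCast (a ^ ((1:ℝ)/4)) 4, ← Real.rpow_mul ha]
  norm_num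

theorem st7_rpow_half {a : ℝ} (ha : 0 ≤ a) : (a ^ ((1:ℝ)/2))^(4:ℕ) = a^2 := by
  rw [← Real.rpow_natCast (a ^ ((1:ℝ)/2)) 4, ← Real.rpow_mul ha]
  norm_num

end Helpers

set_option maxHeartbeats 1000000 in
/-- If `X` is zero-mean with covariance `Σ` satisfying `L₄-L₂` with constant `κ`,
`p ∈ (0,1]` and `Y = X ⊙ p`, then for every unit vector `v`,
`E (vᵀ Off(Y⊗Y) v)² ≤ 4 p² κ⁴ ‖Σ‖²`. -/
theorem statement_7 {Ω : Type*} [MeasureSpace Ω] [IsProbabilityMeasure (ℙ : Measure Ω)]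
    {d : ℕ} (X ε Y : Ω → Fin d → ℝ) (S : Matrix (Fin d) (Fin d) ℝ) (κ p : ℝ)
    (hmean : ZeroMean X) (hcov : IsCov X S) (hmom : FiniteFourthMoments X)
    (hκ : 1 ≤ κ) (hL : L4L2 X κ) (hp : p ∈ Set.Ioc (0 : ℝ) 1)
    (hY : IsSparsified p X ε Y) :
    ∀ v ∈ unitSphere d,
      (∫ ω, (quadForm (offPart (outer (Y ω))) v) ^ 2) ≤
        4 * p ^ 2 * κ ^ 4 * (opNorm S) ^ 2 := by
  classical
  obtain ⟨hmask, hXmeas, hXε, hYdef⟩ := hY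
  obtain ⟨h01, hεmeas, hεP, hεind⟩ := hmask
  obtain ⟨hp0, hp1⟩ := hp
  intro v hv
  have hv1 : ∑ i, (v i)^2 = 1 := hv
  have hκ0 : (0:ℝ) ≤ κ := le_trans zero_le_one hκ
  have hp0' : (0:ℝ) ≤ p := le_of_lt hp0
  set N := opNorm S with hN
  have hN0 : (0:ℝ) ≤ N := norm_nonneg _
  have hXi : ∀ i, Measurable fun ω => X ω i := fun i => (measurable_pi_apply i).comp hXmeas
  have intcongr : ∀ {f g : Ω → ℝ}, Integrable f → (∀ ω, f ω = g ω) → Integrable g :=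
    fun hf he => (funext he : _ = _) ▸ hf
  -- products of two coordinates are integrable
  have intXX : ∀ i j, Integrable (fun ω => X ω i * X ω j) := by
    intro i j
    apply Integrable.mono' (((hmom i j i j).add (integrable_const 1)).div_const 2)
      ((hXi i).mul (hXi j)).aestronglyMeasurable
    filter_upwards with ω
    simp only [Pi.add_apply, Pi.mul_apply]
    rw [Real.norm_eq_abs]
    nlinarith [sq_nonneg (|X ω i * X ω j| - 1), abs_mul_abs_self (X ω i * X ω j),
      abs_nonneg (X ω i * X ω j)]
  -- second moment identity
  have quad_eq : ∀ u : Fin d → ℝ, ∫ ω, (∑ i, X ω i * u i)^2 = quadForm S u := by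
    intro u
    have e : ∀ ω, (∑ i, X ω i * u i)^2 = ∑ i, ∑ j, (u i * u j) * (X ω i * X ω j) := by
      intro ω
      rw [sq, Finset.sum_mul_sum]
      apply Finset.sum_congr rfl; intro i _
      apply Finset.sum_congr rfl; intro j _
      ring
    rw [show (fun ω => (∑ i, X ω i * u i)^2)
        = fun ω => ∑ i, ∑ j, (u i * u j) * (X ω i * X ω j) from funext e]
    rw [integral_finset_sum _ (fun i _ =>
      integrable_finset_sum _ (fun j _ => (intXX i j).const_mul _))]
    calc ∑ i, ∫ ω, ∑ j, (u i * u j) * (X ω i * X ω j)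
        = ∑ i, ∑ j, ∫ ω, (u i * u j) * (X ω i * X ω j) :=
          Finset.sum_congr rfl fun i _ =>
            integral_finset_sum _ (fun j _ => (intXX i j).const_mul _)
      _ = quadForm S u := by
          simp only [quadForm, bilinForm]
          apply Finset.sum_congr rfl; intro i _
          apply Finset.sum_congr rfl; intro j _
          rw [integral_const_mul, ← hcov i j]
          ring
  have quad_nonneg : ∀ u : Fin d → ℝ, 0 ≤ quadForm S u := by
    intro u
    rw [← quad_eq u]
    exact integral_nonneg fun ω => by positivity
  have quad_le : ∀ u : Fin d → ℝ, quadForm S u ≤ N * ∑ i, (u i)^2 :=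
    fun u => st7_quad_le S u
  -- L4-L2 for arbitrary vectors
  have L4_all : ∀ u : Fin d → ℝ, ∫ ω, (∑ i, X ω i * u i)^4
      ≤ κ^4 * (∫ ω, (∑ i, X ω i * u i)^2)^2 := by
    intro u
    by_cases hc : ∑ i, (u i)^2 = 0
    · have hz : ∀ i ∈ Finset.univ, (u i)^2 = 0 :=
        (Finset.sum_eq_zero_iff_of_nonneg (fun i _ => sq_nonneg (u i))).mp hc
      have hz' : ∀ i, u i = 0 := fun i => by
        have := hz i (Finset.mem_univ i)
        exact (pow_eq_zero_iff two_ne_zero).mp this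
      simp [hz']
    · have hcpos : 0 < ∑ i, (u i)^2 :=
        lt_of_le_of_ne (Finset.sum_nonneg fun i _ => sq_nonneg _) (Ne.symm hc)
      set c := Real.sqrt (∑ i, (u i)^2) with hcdef
      have hcpos' : 0 < c := Real.sqrt_pos.mpr hcpos
      have hc2 : c^2 = ∑ i, (u i)^2 := Real.sq_sqrt hcpos.le
      have hunit : (fun i => u i / c) ∈ unitSphere d := by
        show ∑ i, (u i / c)^2 = 1
        simp only [div_pow]
        rw [← Finset.sum_div, ← hc2, div_self (by positivity)]
      have hLu := hL _ hunit
      have hsc : ∀ ω, ∑ i, X ω i * (u i / c) = (∑ i, X ω i * u i) / c := by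
        intro ω; rw [Finset.sum_div]; apply Finset.sum_congr rfl; intro i _; ring
      simp only [hsc] at hLu
      have e4 : (fun ω => |(∑ i, X ω i * u i) / c|^4)
          = fun ω => ((∑ i, X ω i * u i)^4) * (c^4)⁻¹ := by
        funext ω
        rw [abs_div, div_pow, pow_abs, abs_of_nonneg
          (show (0:ℝ) ≤ (∑ i, X ω i * u i)^4 by positivity), pow_abs,
          abs_of_nonneg (show (0:ℝ) ≤ c^4 by positivity), div_eq_mul_inv]
      have e2 : (fun ω => |(∑ i, X ω i * u i) / c|^2)
          = fun ω => ((∑ i, X ω i * u i)^2) * (c^2)⁻¹ := by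
        funext ω
        rw [abs_div, div_pow, pow_abs, abs_of_nonneg
          (show (0:ℝ) ≤ (∑ i, X ω i * u i)^2 by positivity), pow_abs,
          abs_of_nonneg (show (0:ℝ) ≤ c^2 by positivity), div_eq_mul_inv]
      rw [e4, e2, integral_mul_const, integral_mul_const] at hLu
      set A := ∫ ω, (∑ i, X ω i * u i)^4 with hA
      set B := ∫ ω, (∑ i, X ω i * u i)^2 with hB
      have hA0 : 0 ≤ A := integral_nonneg fun ω => by positivity
      have hB0 : 0 ≤ B := integral_nonneg fun ω => by positivity
      have h4 := pow_le_pow_left₀ (Real.rpow_nonneg (by positivity) _) hLu 4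
      rw [st7_rpow_quarter (by positivity), mul_pow,
        st7_rpow_half (by positivity)] at h4
      have e : (B * (c^2)⁻¹)^2 = B^2 * (c^4)⁻¹ := by
        rw [mul_pow, ← inv_pow, ← pow_mul]; norm_num
      rw [e] at h4
      calc A = A * (c^4)⁻¹ * c^4 := by field_simp
        _ ≤ κ^4 * (B^2 * (c^4)⁻¹) * c^4 :=
            mul_le_mul_of_nonneg_right h4 (by positivity)
        _ = κ^4 * B^2 := by field_simp
  -- key uniform fourth-moment bound
  have keybound : ∀ u : Fin d → ℝ, (∑ i, (u i)^2) ≤ 1 →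
      ∫ ω, (∑ i, X ω i * u i)^4 ≤ κ^4 * N^2 := by
    intro u hu
    have h3 : quadForm S u ≤ N := le_trans (quad_le u)
      (by nlinarith [hN0])
    have h4 : 0 ≤ quadForm S u := quad_nonneg u
    calc ∫ ω, (∑ i, X ω i * u i)^4
        ≤ κ^4 * (∫ ω, (∑ i, X ω i * u i)^2)^2 := L4_all u
      _ = κ^4 * (quadForm S u)^2 := by rw [quad_eq u]
      _ ≤ κ^4 * N^2 := mul_le_mul_of_nonneg_left (pow_le_pow_left₀ h4 h3 2) (by positivity)
  -- integrability of quartics of linear forms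
  have intpow4 : ∀ c : Fin d → ℝ, Integrable (fun ω => (∑ i, X ω i * c i)^4) := by
    intro c
    have e : ∀ ω, (∑ i, X ω i * c i)^4
        = ∑ i, ∑ k, ∑ j, ∑ l, (c i * c j * (c k * c l))
            * (X ω i * X ω j * (X ω k * X ω l)) := by
      intro ω
      rw [st7_sum_pow_four]
      apply Finset.sum_congr rfl; intro i _
      apply Finset.sum_congr rfl; intro k _
      apply Finset.sum_congr rfl; intro j _
      apply Finset.sum_congr rfl; intro l _
      ring
    rw [show (fun ω => (∑ i, X ω i * c i)^4)
        = fun ω => ∑ i, ∑ k, ∑ j, ∑ l, (c i * c j * (c k * c l))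
            * (X ω i * X ω j * (X ω k * X ω l)) from funext e]
    apply integrable_finset_sum; intro i _
    apply integrable_finset_sum; intro k _
    apply integrable_finset_sum; intro j _
    apply integrable_finset_sum; intro l _
    exact intcongr ((hmom i j k l).const_mul (c i * c j * (c k * c l))) fun ω => by ring
  have intX4 : ∀ i, Integrable (fun ω => (X ω i)^4) :=
    fun i => intcongr (hmom i i i i) fun ω => by ring
  have habs1 : ∀ ω m, |ε ω m| ≤ 1 := by
    intro ω m; rcases h01 ω m with h | h <;> simp [h]
  -- the integrand with the mask, and its de-masked version
  set T : Fin d → Fin d → Fin d → Fin d → Ω → ℝ := fun i j k l ω =>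
    (if i = j then (0:ℝ) else 1) * (if k = l then (0:ℝ) else 1) *
      ((v i * v j * (v k * v l)) * (X ω i * X ω j * (X ω k * X ω l))) *
      (ε ω i * ε ω j * ε ω k * ε ω l) with hT
  set g : Fin d → Fin d → Fin d → Fin d → Ω → ℝ := fun i j k l ω =>
    (if i = j then (0:ℝ) else 1) * (if k = l then (0:ℝ) else 1) *
      (p^2 * (if k = i ∨ k = j then 1 else p) * (if l = i ∨ l = j then 1 else p)) *
      (X ω i * v i * (X ω j * v j) * (X ω k * v k * (X ω l * v l))) with hg
  have hZ : ∀ ω, quadForm (offPart (outer (Y ω))) v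
      = ∑ i, ∑ j, (if i = j then (0:ℝ) else 1)
          * ((X ω i * v i * ε ω i) * (X ω j * v j * ε ω j)) := by
    intro ω
    simp only [quadForm, bilinForm, offPart, diagPart, outer, Matrix.sub_apply,
      Matrix.of_apply]
    apply Finset.sum_congr rfl; intro i _
    apply Finset.sum_congr rfl; intro j _
    rw [hYdef ω i, hYdef ω j]
    by_cases hij : i = j
    · simp [hij]
    · simp only [if_neg hij]; ring
  have hZ2 : ∀ ω, (quadForm (offPart (outer (Y ω))) v)^2
      = ∑ i, ∑ k, ∑ j, ∑ l, T i j k l ω := by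
    intro ω
    simp only [hT]
    rw [hZ ω, sq, Finset.sum_mul_sum]
    apply Finset.sum_congr rfl; intro i _
    apply Finset.sum_congr rfl; intro k _
    rw [Finset.sum_mul_sum]
    apply Finset.sum_congr rfl; intro j _
    apply Finset.sum_congr rfl; intro l _
    ring
  have hint_term : ∀ i j k l : Fin d, Integrable (fun ω => T i j k l ω) := by
    intro i j k l
    have hgint : Integrable (fun ω => (if i = j then (0:ℝ) else 1) * (if k = l then (0:ℝ) else 1) *
        ((v i * v j * (v k * v l)) * (X ω i * X ω j * (X ω k * X ω l)))) :=
      intcongr ((hmom i j k l).const_mul ((if i = j then (0:ℝ) else 1)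
        * (if k = l then (0:ℝ) else 1) * (v i * v j * (v k * v l)))) fun ω => by ring
    have hf : Integrable (fun ω => (ε ω i * ε ω j * ε ω k * ε ω l) *
        ((if i = j then (0:ℝ) else 1) * (if k = l then (0:ℝ) else 1) *
          ((v i * v j * (v k * v l)) * (X ω i * X ω j * (X ω k * X ω l))))) := by
      apply Integrable.bdd_mul (c := 1) hgint
      · exact ((((hεmeas i).mul (hεmeas j)).mul (hεmeas k)).mul (hεmeas l)).aestronglyMeasurable
      · refine Filter.Eventually.of_forall fun ω => ?_
        rw [Real.norm_eq_abs, abs_mul, abs_mul, abs_mul]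
        have h1 := habs1 ω i; have h2 := habs1 ω j
        have h3 := habs1 ω k; have h4 := habs1 ω l
        have a1 := abs_nonneg (ε ω i); have a2 := abs_nonneg (ε ω j)
        have a3 := abs_nonneg (ε ω k); have a4 := abs_nonneg (ε ω l)
        have m1 : |ε ω i| * |ε ω j| ≤ 1 := mul_le_one₀ h1 a2 h2
        have m2 : |ε ω i| * |ε ω j| * |ε ω k| ≤ 1 :=
          mul_le_one₀ m1 a3 h3
        exact mul_le_one₀ m2 a4 h4
    exact intcongr hf fun ω => by simp only [hT]; ring
  have hint_g : ∀ i j k l : Fin d, Integrable (fun ω => g i j k l ω) := by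
    intro i j k l
    exact intcongr ((hmom i j k l).const_mul ((if i = j then (0:ℝ) else 1)
      * (if k = l then (0:ℝ) else 1)
      * (p^2 * (if k = i ∨ k = j then 1 else p) * (if l = i ∨ l = j then 1 else p))
      * (v i * v j * (v k * v l)))) fun ω => by simp only [hg]; ring
  have hterm_val : ∀ i j k l : Fin d, ∫ ω, T i j k l ω = ∫ ω, g i j k l ω := by
    intro i j k l
    by_cases hij : i = j
    · have e1 : (fun ω => T i j k l ω) = fun _ => (0:ℝ) :=
        funext fun ω => by simp [hT, hij]
      have e2 : (fun ω => g i j k l ω) = fun _ => (0:ℝ) :=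
        funext fun ω => by simp [hg, hij]
      rw [e1, e2]
    · by_cases hkl : k = l
      · have e1 : (fun ω => T i j k l ω) = fun _ => (0:ℝ) :=
          funext fun ω => by simp [hT, hkl]
        have e2 : (fun ω => g i j k l ω) = fun _ => (0:ℝ) :=
          funext fun ω => by simp [hg, hkl]
        rw [e1, e2]
      · have hfmeas : Measurable (fun x : Fin d → ℝ => x i * x j * (x k * x l)) :=
          ((measurable_pi_apply i).mul (measurable_pi_apply j)).mul
            ((measurable_pi_apply k).mul (measurable_pi_apply l))
        have hgmeas : Measurable (fun x : Fin d → ℝ => x i * x j * x k * x l) :=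
          (((measurable_pi_apply i).mul (measurable_pi_apply j)).mul
            (measurable_pi_apply k)).mul (measurable_pi_apply l)
        have hIndep : IndepFun (fun ω => X ω i * X ω j * (X ω k * X ω l))
            (fun ω => ε ω i * ε ω j * ε ω k * ε ω l) ℙ := hXε.comp hfmeas hgmeas
        have hAmeas : AEStronglyMeasurable (fun ω => X ω i * X ω j * (X ω k * X ω l)) ℙ :=
          (((hXi i).mul (hXi j)).mul ((hXi k).mul (hXi l))).aestronglyMeasurable
        have hBmeas : AEStronglyMeasurable (fun ω => ε ω i * ε ω j * ε ω k * ε ω l) ℙ :=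
          ((((hεmeas i).mul (hεmeas j)).mul (hεmeas k)).mul (hεmeas l)).aestronglyMeasurable
        have hmul := hIndep.integral_mul_eq_mul_integral hAmeas hBmeas
        have epi : ((fun ω => X ω i * X ω j * (X ω k * X ω l))
            * fun ω => ε ω i * ε ω j * ε ω k * ε ω l)
            = fun ω => (X ω i * X ω j * (X ω k * X ω l))
                * (ε ω i * ε ω j * ε ω k * ε ω l) := rfl
        rw [epi] at hmul
        have heps := st7_eps4 hp0' h01 hεmeas hεP hεind hij hkl
        calc ∫ ω, T i j k l ω
            = ∫ ω, (v i * v j * (v k * v l)) * ((X ω i * X ω j * (X ω k * X ω l))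
                * (ε ω i * ε ω j * ε ω k * ε ω l)) := by
              congr 1; funext ω; simp only [hT, if_neg hij, if_neg hkl]; ring
          _ = (v i * v j * (v k * v l)) * ((∫ ω, X ω i * X ω j * (X ω k * X ω l))
                * (p^2 * (if k = i ∨ k = j then 1 else p)
                    * (if l = i ∨ l = j then 1 else p))) := by
              rw [integral_const_mul, hmul, heps]
          _ = ∫ ω, g i j k l ω := by
              rw [show (fun ω => g i j k l ω)
                  = fun ω => ((if i = j then (0:ℝ) else 1) * (if k = l then (0:ℝ) else 1)
                      * (p^2 * (if k = i ∨ k = j then 1 else p)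
                          * (if l = i ∨ l = j then 1 else p))
                      * (v i * v j * (v k * v l)))
                      * (X ω i * X ω j * (X ω k * X ω l)) from
                funext fun ω => by simp only [hg]; ring]
              rw [integral_const_mul, if_neg hij, if_neg hkl]
              ring
  -- exchange integral and sums, both directions
  have exch1 : ∫ ω, ∑ i, ∑ k, ∑ j, ∑ l, T i j k l ω
      = ∑ i, ∑ k, ∑ j, ∑ l, ∫ ω, T i j k l ω := by
    rw [integral_finset_sum _ (fun i _ => integrable_finset_sum _ (fun k _ =>
      integrable_finset_sum _ (fun j _ => integrable_finset_sum _ (fun l _ =>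
        hint_term i j k l))))]
    apply Finset.sum_congr rfl; intro i _
    rw [integral_finset_sum _ (fun k _ => integrable_finset_sum _ (fun j _ =>
      integrable_finset_sum _ (fun l _ => hint_term i j k l)))]
    apply Finset.sum_congr rfl; intro k _
    rw [integral_finset_sum _ (fun j _ => integrable_finset_sum _ (fun l _ =>
      hint_term i j k l))]
    apply Finset.sum_congr rfl; intro j _
    rw [integral_finset_sum _ (fun l _ => hint_term i j k l)]
  have exch2 : ∫ ω, ∑ i, ∑ k, ∑ j, ∑ l, g i j k l ω
      = ∑ i, ∑ k, ∑ j, ∑ l, ∫ ω, g i j k l ω := by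
    rw [integral_finset_sum _ (fun i _ => integrable_finset_sum _ (fun k _ =>
      integrable_finset_sum _ (fun j _ => integrable_finset_sum _ (fun l _ =>
        hint_g i j k l))))]
    apply Finset.sum_congr rfl; intro i _
    rw [integral_finset_sum _ (fun k _ => integrable_finset_sum _ (fun j _ =>
      integrable_finset_sum _ (fun l _ => hint_g i j k l)))]
    apply Finset.sum_congr rfl; intro k _
    rw [integral_finset_sum _ (fun j _ => integrable_finset_sum _ (fun l _ =>
      hint_g i j k l))]
    apply Finset.sum_congr rfl; intro j _
    rw [integral_finset_sum _ (fun l _ => hint_g i j k l)]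
  -- the ε-free integrand coincides pointwise with the key algebraic expression
  set Gq : Ω → ℝ := fun ω =>
    p^4 * ((∑ i, X ω i * v i)^2 - ∑ i, (X ω i * v i)^2)^2
      + 4*p^3*(1-p) * (∑ i, (X ω i * v i)^2 * ((∑ j, X ω j * v j) - X ω i * v i)^2)
      + 2*p^2*(1-p)^2 * ((∑ i, (X ω i * v i)^2)^2 - ∑ i, (X ω i * v i)^4) with hGq
  have hpoint : ∀ ω, (∑ i, ∑ k, ∑ j, ∑ l, g i j k l ω) = Gq ω := by
    intro ω
    have hswap : (∑ i, ∑ k, ∑ j, ∑ l, g i j k l ω)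
        = ∑ i, ∑ j, ∑ k, ∑ l, g i j k l ω :=
      Finset.sum_congr rfl fun i _ => Finset.sum_comm
    rw [hswap]
    simp only [hg, hGq]
    exact st7_key_alg p (fun m => X ω m * v m)
  have hGqint : Integrable Gq :=
    intcongr (integrable_finset_sum _ (fun i _ => integrable_finset_sum _ (fun k _ =>
      integrable_finset_sum _ (fun j _ => integrable_finset_sum _ (fun l _ =>
        hint_g i j k l))))) hpoint
  have hsofar : ∫ ω, (quadForm (offPart (outer (Y ω))) v)^2 = ∫ ω, Gq ω := by
    calc ∫ ω, (quadForm (offPart (outer (Y ω))) v)^2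
        = ∫ ω, ∑ i, ∑ k, ∑ j, ∑ l, T i j k l ω := by
          congr 1; funext ω; rw [hZ2 ω]
      _ = ∑ i, ∑ k, ∑ j, ∑ l, ∫ ω, T i j k l ω := exch1
      _ = ∑ i, ∑ k, ∑ j, ∑ l, ∫ ω, g i j k l ω := by
          apply Finset.sum_congr rfl; intro i _
          apply Finset.sum_congr rfl; intro k _
          apply Finset.sum_congr rfl; intro j _
          apply Finset.sum_congr rfl; intro l _
          exact hterm_val i j k l
      _ = ∫ ω, ∑ i, ∑ k, ∑ j, ∑ l, g i j k l ω := exch2.symm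
      _ = ∫ ω, Gq ω := by congr 1; funext ω; rw [hpoint ω]
  -- auxiliary vectors and bounds
  have hWm : ∀ ω (m : Fin d), ∑ i, X ω i * (if i = m then 0 else v i)
      = (∑ i, X ω i * v i) - X ω m * v m := by
    intro ω m
    have e : ∀ i : Fin d, X ω i * (if i = m then 0 else v i)
        = X ω i * v i - (if i = m then X ω i * v i else 0) := by
      intro i; by_cases h : i = m <;> simp [h]
    rw [Finset.sum_congr rfl fun i _ => e i, Finset.sum_sub_distrib, Finset.sum_ite_eq']
    simp
  have hu2 : ∀ m : Fin d, ∑ i, ((if i = m then (0:ℝ) else v i))^2 ≤ 1 := by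
    intro m
    have e : ∀ i : Fin d, ((if i = m then (0:ℝ) else v i))^2
        = (v i)^2 - (if i = m then (v i)^2 else 0) := by
      intro i; by_cases h : i = m <;> simp [h]
    rw [Finset.sum_congr rfl fun i _ => e i, Finset.sum_sub_distrib, Finset.sum_ite_eq']
    simp only [Finset.mem_univ, if_pos, hv1]
    nlinarith [sq_nonneg (v m)]
  have hX4bound : ∀ m : Fin d, ∫ ω, (X ω m)^4 ≤ κ^4 * N^2 := by
    intro m
    have hsum : ∀ ω, ∑ i, X ω i * (if i = m then (1:ℝ) else 0) = X ω m := by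
      intro ω
      rw [Finset.sum_congr rfl (fun i _ =>
        show X ω i * (if i = m then (1:ℝ) else 0) = if i = m then X ω i else 0 from by
          by_cases h : i = m <;> simp [h]), Finset.sum_ite_eq']
      simp
    have hb := keybound (fun i => if i = m then (1:ℝ) else 0) (by
      rw [Finset.sum_congr rfl (fun i _ =>
        show ((if i = m then (1:ℝ) else 0))^2 = if i = m then (1:ℝ) else 0 from by
          by_cases h : i = m <;> simp [h]), Finset.sum_ite_eq']
      simp)
    rw [show (fun ω => (∑ i, X ω i * (if i = m then (1:ℝ) else 0))^4)
        = fun ω => (X ω m)^4 from funext fun ω => by rw [hsum ω]] at hb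
    exact hb
  have intWm4 : ∀ m : Fin d, Integrable (fun ω => ((∑ i, X ω i * v i) - X ω m * v m)^4) :=
    fun m => intcongr (intpow4 (fun i => if i = m then 0 else v i))
      (fun ω => by rw [hWm ω m])
  have hWm4bound : ∀ m : Fin d,
      ∫ ω, ((∑ i, X ω i * v i) - X ω m * v m)^4 ≤ κ^4 * N^2 := by
    intro m
    have hb := keybound (fun i => if i = m then 0 else v i) (hu2 m)
    rw [show (fun ω => (∑ i, X ω i * (if i = m then (0:ℝ) else v i))^4)
        = fun ω => ((∑ i, X ω i * v i) - X ω m * v m)^4 from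
      funext fun ω => by rw [hWm ω m]] at hb
    exact hb
  have hW4bound : ∫ ω, (∑ i, X ω i * v i)^4 ≤ κ^4 * N^2 := keybound v (le_of_eq hv1)
  -- the majorant
  set Hm : Ω → ℝ := fun ω =>
    p^4 * ((∑ i, X ω i * v i)^4 + ∑ i, (v i)^2 * (X ω i)^4)
      + 4*p^3*(1-p) * (∑ m, (v m)^2
          * (((X ω m)^4 + ((∑ i, X ω i * v i) - X ω m * v m)^4)/2))
      + 2*p^2*(1-p)^2 * (∑ i, (v i)^2 * (X ω i)^4) with hHm
  have hq0 : (0:ℝ) ≤ 1 - p := by linarith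
  have hmaj : ∀ ω, Gq ω ≤ Hm ω := by
    intro ω
    have hCS : (∑ i, (X ω i * v i)^2)^2 ≤ ∑ i, (v i)^2 * (X ω i)^4 := by
      have h := Finset.sum_mul_sq_le_sq_mul_sq Finset.univ (fun i => v i)
        (fun i => v i * (X ω i)^2)
      calc (∑ i, (X ω i * v i)^2)^2 = (∑ i, v i * (v i * (X ω i)^2))^2 := by
            congr 1; apply Finset.sum_congr rfl; intro i _; ring
        _ ≤ (∑ i, (v i)^2) * ∑ i, (v i * (X ω i)^2)^2 := h
        _ = ∑ i, (v i)^2 * (X ω i)^4 := by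
            rw [hv1, one_mul]; apply Finset.sum_congr rfl; intro i _; ring
    have hD0 : 0 ≤ ∑ i, (X ω i * v i)^2 :=
      Finset.sum_nonneg fun i _ => sq_nonneg _
    have t1 : ((∑ i, X ω i * v i)^2 - ∑ i, (X ω i * v i)^2)^2
        ≤ (∑ i, X ω i * v i)^4 + ∑ i, (v i)^2 * (X ω i)^4 := by
      nlinarith [sq_nonneg (∑ i, X ω i * v i),
        mul_nonneg (sq_nonneg (∑ i, X ω i * v i)) hD0]
    have t2 : ∑ i, (X ω i * v i)^2 * ((∑ j, X ω j * v j) - X ω i * v i)^2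
        ≤ ∑ m, (v m)^2 * (((X ω m)^4 + ((∑ i, X ω i * v i) - X ω m * v m)^4)/2) := by
      apply Finset.sum_le_sum; intro m _
      nlinarith [mul_nonneg (sq_nonneg (v m))
        (sq_nonneg ((X ω m)^2 - ((∑ i, X ω i * v i) - X ω m * v m)^2))]
    have t3 : (∑ i, (X ω i * v i)^2)^2 - ∑ i, (X ω i * v i)^4
        ≤ ∑ i, (v i)^2 * (X ω i)^4 := by
      have h4 : 0 ≤ ∑ i, (X ω i * v i)^4 :=
        Finset.sum_nonneg fun i _ => by positivity
      linarith
    simp only [hGq, hHm]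
    have c1 : (0:ℝ) ≤ p^4 := by positivity
    have c2 : (0:ℝ) ≤ 4*p^3*(1-p) := mul_nonneg (by positivity) hq0
    have c3 : (0:ℝ) ≤ 2*p^2*(1-p)^2 := by positivity
    exact add_le_add (add_le_add (mul_le_mul_of_nonneg_left t1 c1)
      (mul_le_mul_of_nonneg_left t2 c2)) (mul_le_mul_of_nonneg_left t3 c3)
  -- integrability of the majorant pieces
  have intsumX4 : Integrable (fun ω => ∑ i, (v i)^2 * (X ω i)^4) :=
    integrable_finset_sum _ fun i _ => (intX4 i).const_mul _
  have intmid1 : ∀ m : Fin d, Integrable (fun ω => (v m)^2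
      * (((X ω m)^4 + ((∑ i, X ω i * v i) - X ω m * v m)^4)/2)) := fun m =>
    (((intX4 m).add (intWm4 m)).div_const 2).const_mul _
  have intmid : Integrable (fun ω => ∑ m, (v m)^2
      * (((X ω m)^4 + ((∑ i, X ω i * v i) - X ω m * v m)^4)/2)) :=
    integrable_finset_sum _ fun m _ => intmid1 m
  have intA : Integrable (fun ω => p^4 * ((∑ i, X ω i * v i)^4
      + ∑ i, (v i)^2 * (X ω i)^4)) :=
    ((intpow4 v).add intsumX4).const_mul _
  have intB : Integrable (fun ω => 4*p^3*(1-p) * (∑ m, (v m)^2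
      * (((X ω m)^4 + ((∑ i, X ω i * v i) - X ω m * v m)^4)/2))) :=
    intmid.const_mul _
  have intC : Integrable (fun ω => 2*p^2*(1-p)^2 * (∑ i, (v i)^2 * (X ω i)^4)) :=
    intsumX4.const_mul _
  have intHm : Integrable Hm := by
    rw [hHm]
    exact (intA.add intB).add intC
  -- integral bounds for the majorant pieces
  have hsumX4b : ∫ ω, ∑ i, (v i)^2 * (X ω i)^4 ≤ κ^4 * N^2 := by
    rw [integral_finset_sum _ fun i _ => (intX4 i).const_mul _]
    calc ∑ i, ∫ ω, (v i)^2 * (X ω i)^4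
        = ∑ i, (v i)^2 * ∫ ω, (X ω i)^4 :=
          Finset.sum_congr rfl fun i _ => integral_const_mul _ _
      _ ≤ ∑ i, (v i)^2 * (κ^4 * N^2) := Finset.sum_le_sum fun i _ =>
          mul_le_mul_of_nonneg_left (hX4bound i) (sq_nonneg _)
      _ = κ^4 * N^2 := by rw [← Finset.sum_mul, hv1, one_mul]
  have hmidb : ∫ ω, ∑ m, (v m)^2
      * (((X ω m)^4 + ((∑ i, X ω i * v i) - X ω m * v m)^4)/2) ≤ κ^4 * N^2 := by
    rw [integral_finset_sum _ fun m _ => intmid1 m]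
    calc ∑ m, ∫ ω, (v m)^2 * (((X ω m)^4 + ((∑ i, X ω i * v i) - X ω m * v m)^4)/2)
        = ∑ m, (v m)^2 * ((∫ ω, ((X ω m)^4
            + ((∑ i, X ω i * v i) - X ω m * v m)^4))/2) := by
          apply Finset.sum_congr rfl; intro m _
          rw [integral_const_mul, integral_div]
      _ ≤ ∑ m, (v m)^2 * (κ^4 * N^2) := by
          apply Finset.sum_le_sum; intro m _
          apply mul_le_mul_of_nonneg_left _ (sq_nonneg _)
          have intadd : Integrable (fun ω => (X ω m)^4
              + ((∑ i, X ω i * v i) - X ω m * v m)^4) := (intX4 m).add (intWm4 m)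
          rw [integral_add (intX4 m) (intWm4 m)]
          linarith [hX4bound m, hWm4bound m]
      _ = κ^4 * N^2 := by rw [← Finset.sum_mul, hv1, one_mul]
  have hHmb : ∫ ω, Hm ω ≤ p^4 * (κ^4*N^2 + κ^4*N^2) + 4*p^3*(1-p) * (κ^4*N^2)
      + 2*p^2*(1-p)^2 * (κ^4*N^2) := by
    have hsplit : ∫ ω, Hm ω = (∫ ω, p^4 * ((∑ i, X ω i * v i)^4
        + ∑ i, (v i)^2 * (X ω i)^4))
        + (∫ ω, 4*p^3*(1-p) * (∑ m, (v m)^2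
            * (((X ω m)^4 + ((∑ i, X ω i * v i) - X ω m * v m)^4)/2)))
        + ∫ ω, 2*p^2*(1-p)^2 * (∑ i, (v i)^2 * (X ω i)^4) := by
      have intAB : Integrable (fun ω => p^4 * ((∑ i, X ω i * v i)^4
          + ∑ i, (v i)^2 * (X ω i)^4)
          + 4*p^3*(1-p) * (∑ m, (v m)^2
              * (((X ω m)^4 + ((∑ i, X ω i * v i) - X ω m * v m)^4)/2))) :=
        intA.add intB
      simp only [hHm]
      rw [integral_add intAB intC, integral_add intA intB]
    rw [hsplit]
    have b1 : ∫ ω, p^4 * ((∑ i, X ω i * v i)^4 + ∑ i, (v i)^2 * (X ω i)^4)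
        ≤ p^4 * (κ^4*N^2 + κ^4*N^2) := by
      rw [integral_const_mul, integral_add (intpow4 v) intsumX4]
      apply mul_le_mul_of_nonneg_left _ (by positivity : (0:ℝ) ≤ p^4)
      linarith [hW4bound, hsumX4b]
    have b2 : ∫ ω, 4*p^3*(1-p) * (∑ m, (v m)^2
        * (((X ω m)^4 + ((∑ i, X ω i * v i) - X ω m * v m)^4)/2))
        ≤ 4*p^3*(1-p) * (κ^4*N^2) := by
      rw [integral_const_mul]
      exact mul_le_mul_of_nonneg_left hmidb (mul_nonneg (by positivity) hq0)
    have b3 : ∫ ω, 2*p^2*(1-p)^2 * (∑ i, (v i)^2 * (X ω i)^4)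
        ≤ 2*p^2*(1-p)^2 * (κ^4*N^2) := by
      rw [integral_const_mul]
      exact mul_le_mul_of_nonneg_left hsumX4b (by positivity)
    linarith
  -- conclusion
  rw [hsofar]
  have hK0 : (0:ℝ) ≤ κ^4 * N^2 := by positivity
  calc ∫ ω, Gq ω ≤ ∫ ω, Hm ω := integral_mono hGqint intHm hmaj
    _ ≤ p^4 * (κ^4*N^2 + κ^4*N^2) + 4*p^3*(1-p) * (κ^4*N^2)
        + 2*p^2*(1-p)^2 * (κ^4*N^2) := hHmb
    _ ≤ 4 * p^2 * κ^4 * N^2 := by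
        nlinarith [hK0, hp0', hp1, sq_nonneg p, mul_nonneg (mul_nonneg hp0' hp0') hK0]
end

section
/- Let M be any d×d real matrix, v ∈ R^d, and β > 0. Let θ and ν be independent Gaussian random vectors in R^d, each with mean v and covariance β^{−1} I_d. Then P( θᵀ M ν ≥ vᵀ M v ) ≥ 1/4. -/
open MeasureTheory ProbabilityTheory Real
open scoped ENNReal NNReal

lemma gauss_refl (m c : ℝ) (s : ℝ≥0) :
    (gaussianReal m s).map (fun x => c - x) = gaussianReal (c - m) s := by
  have h1 : (fun x : ℝ => c - x) = (fun y => y + c) ∘ (fun x => (-1 : ℝ) * x) := by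
    ext x; simp; ring
  rw [h1, ← Measure.map_map (measurable_add_const c) (measurable_const_mul (-1)),
    gaussianReal_map_const_mul, gaussianReal_map_add_const]
  congr 1
  · ring
  · ext; norm_num

lemma law_pi {Ω : Type*} [MeasureSpace Ω] [IsProbabilityMeasure (ℙ : Measure Ω)]
    {d : ℕ} (X : Ω → Fin d → ℝ) (μs : Fin d → Measure ℝ) [∀ i, IsProbabilityMeasure (μs i)]
    (hm : ∀ i, Measurable fun ω => X ω i)
    (hlaw : ∀ i, Measure.map (fun ω => X ω i) ℙ = μs i)
    (hi : iIndepFun (fun i ω => X ω i) ℙ) :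
    Measure.map X ℙ = Measure.pi μs := by
  have hX : Measurable X := measurable_pi_lambda _ hm
  refine (Measure.pi_eq fun s hs => ?_).symm
  rw [Measure.map_apply hX (MeasurableSet.univ_pi hs)]
  have hpre : X ⁻¹' Set.pi Set.univ s = ⋂ i, (fun ω => X ω i) ⁻¹' s i := by
    ext ω; simp [Set.mem_pi]
  rw [hpre, hi.meas_iInter (fun i => ⟨s i, hs i, rfl⟩)]
  refine Finset.prod_congr rfl fun i _ => ?_
  rw [← hlaw i, Measure.map_apply (hm i) (hs i)]

/-- If `θ, ν` are independent Gaussian vectors in `ℝ^d`, each with mean `v` and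
covariance `β⁻¹ I_d`, then for any matrix `M`, `P(θᵀ M ν ≥ vᵀ M v) ≥ 1/4`. -/
theorem statement_9 {Ω : Type*} [MeasureSpace Ω] [IsProbabilityMeasure (ℙ : Measure Ω)]
    {d : ℕ} (M : Matrix (Fin d) (Fin d) ℝ) (v : Fin d → ℝ) (β : ℝ) (hβ : 0 < β)
    (θ ν : Ω → Fin d → ℝ)
    (hθ : IsGaussianVecIndep v (β⁻¹).toNNReal θ)
    (hν : IsGaussianVecIndep v (β⁻¹).toNNReal ν)
    (hind : IndepFun θ ν) :
    ENNReal.ofReal (1 / 4) ≤ ℙ {ω | quadForm M v ≤ bilinForm M (θ ω) (ν ω)} := by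
  obtain ⟨hθm, hθg, hθi⟩ := hθ
  obtain ⟨hνm, hνg, hνi⟩ := hν
  have hθM : Measurable θ := measurable_pi_lambda _ hθm
  have hνM : Measurable ν := measurable_pi_lambda _ hνm
  set f : (Fin d → ℝ) → (Fin d → ℝ) := fun x i => 2 * v i - x i with hf
  have hfm : Measurable f :=
    measurable_pi_lambda _ fun i => measurable_const.sub (measurable_pi_apply i)
  -- reflection invariance of each marginal law
  have hinvlaw : ∀ (X : Ω → Fin d → ℝ), (∀ i, Measurable fun ω => X ω i) →
      (∀ i, Measure.map (fun ω => X ω i) ℙ = gaussianReal (v i) (β⁻¹).toNNReal) →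
      iIndepFun (fun i ω => X ω i) ℙ →
      Measure.map f (Measure.map X ℙ) = Measure.map X ℙ := by
    intro X hm hlaw hi
    have hXM : Measurable X := measurable_pi_lambda _ hm
    have h1 : Measure.map X ℙ = Measure.pi (fun i => gaussianReal (v i) (β⁻¹).toNNReal) :=
      law_pi X _ hm hlaw hi
    have h2 : Measure.map (fun ω => f (X ω)) ℙ
        = Measure.pi (fun i => gaussianReal (v i) (β⁻¹).toNNReal) := by
      refine law_pi _ _ (fun i => measurable_const.sub (hm i)) (fun i => ?_)
        (hi.comp (fun i x => 2 * v i - x)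
          (fun i => measurable_const.sub measurable_id))
      have hg : Measurable fun x : ℝ => 2 * v i - x := by fun_prop
      have hcomp : (fun ω => f (X ω) i) = (fun x => 2 * v i - x) ∘ (fun ω => X ω i) := rfl
      rw [hcomp, ← Measure.map_map hg (hm i), hlaw i, gauss_refl]
      congr 1; ring
    rw [Measure.map_map hfm hXM, show (f ∘ X) = fun ω => f (X ω) from rfl, h2, h1]
  have hθinv : Measure.map f (Measure.map θ ℙ) = Measure.map θ ℙ := hinvlaw θ hθm hθg hθi
  have hνinv : Measure.map f (Measure.map ν ℙ) = Measure.map ν ℙ := hinvlaw ν hνm hνg hνi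
  -- the joint law
  have hjoint : Measure.map (fun ω => (θ ω, ν ω)) ℙ = (Measure.map θ ℙ).prod (Measure.map ν ℙ) :=
    (indepFun_iff_map_prod_eq_prod_map_map hθM.aemeasurable hνM.aemeasurable).mp hind
  haveI : IsProbabilityMeasure (Measure.map θ ℙ) := Measure.isProbabilityMeasure_map hθM.aemeasurable
  haveI : IsProbabilityMeasure (Measure.map ν ℙ) := Measure.isProbabilityMeasure_map hνM.aemeasurable
  set μ := (Measure.map θ ℙ).prod (Measure.map ν ℙ) with hμ
  haveI : IsProbabilityMeasure μ := by rw [hμ]; infer_instance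
  -- invariance of the joint law under the three reflections
  have hinv : ∀ g₁ g₂ : (Fin d → ℝ) → (Fin d → ℝ), Measurable g₁ → Measurable g₂ →
      Measure.map g₁ (Measure.map θ ℙ) = Measure.map θ ℙ →
      Measure.map g₂ (Measure.map ν ℙ) = Measure.map ν ℙ →
      Measure.map (Prod.map g₁ g₂) μ = μ := by
    intro g₁ g₂ hg₁ hg₂ h₁ h₂
    rw [hμ, ← Measure.map_prod_map _ _ hg₁ hg₂, h₁, h₂]
  -- the event set
  set B : Set ((Fin d → ℝ) × (Fin d → ℝ)) :=
    {p | quadForm M v ≤ bilinForm M p.1 p.2} with hB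
  have hbilin : Measurable fun p : (Fin d → ℝ) × (Fin d → ℝ) => bilinForm M p.1 p.2 := by
    unfold bilinForm
    refine Finset.measurable_sum _ fun i _ => Finset.measurable_sum _ fun j _ => ?_
    exact (((measurable_pi_apply i).comp measurable_fst).mul measurable_const).mul
      ((measurable_pi_apply j).comp measurable_snd)
  have hBmeas : MeasurableSet B := measurableSet_le measurable_const hbilin
  -- key algebraic identity
  have key : ∀ x y : Fin d → ℝ,
      bilinForm M x y + bilinForm M (f x) y + bilinForm M x (f y) + bilinForm M (f x) (f y)
        = 4 * quadForm M v := by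
    intro x y
    simp only [bilinForm, quadForm, hf]
    rw [← Finset.sum_add_distrib, ← Finset.sum_add_distrib, ← Finset.sum_add_distrib,
      Finset.mul_sum]
    refine Finset.sum_congr rfl fun i _ => ?_
    rw [← Finset.sum_add_distrib, ← Finset.sum_add_distrib, ← Finset.sum_add_distrib,
      Finset.mul_sum]
    refine Finset.sum_congr rfl fun j _ => ?_
    ring
  -- covering
  have hcover : (Set.univ : Set ((Fin d → ℝ) × (Fin d → ℝ))) ⊆
      B ∪ (Prod.map f id ⁻¹' B ∪ (Prod.map id f ⁻¹' B ∪ Prod.map f f ⁻¹' B)) := by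
    rintro ⟨x, y⟩ -
    by_contra h
    simp only [Set.mem_union, Set.mem_preimage, Prod.map_apply, id_eq, hB, Set.mem_setOf_eq,
      not_or, not_le] at h
    obtain ⟨h1, h2, h3, h4⟩ := h
    have := key x y
    linarith
  -- measures of reflected events
  have hμmap : ∀ g₁ g₂ : (Fin d → ℝ) → (Fin d → ℝ), Measurable g₁ → Measurable g₂ →
      Measure.map (Prod.map g₁ g₂) μ = μ → μ (Prod.map g₁ g₂ ⁻¹' B) = μ B := by
    intro g₁ g₂ hg₁ hg₂ hmap
    conv_rhs => rw [← hmap]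
    rw [Measure.map_apply (hg₁.prodMap hg₂) hBmeas]
  have e1 : μ (Prod.map f id ⁻¹' B) = μ B :=
    hμmap f id hfm measurable_id (hinv f id hfm measurable_id hθinv (Measure.map_id))
  have e2 : μ (Prod.map id f ⁻¹' B) = μ B :=
    hμmap id f measurable_id hfm (hinv id f measurable_id hfm (Measure.map_id) hνinv)
  have e3 : μ (Prod.map f f ⁻¹' B) = μ B :=
    hμmap f f hfm hfm (hinv f f hfm hfm hθinv hνinv)
  -- 1 ≤ 4 μ B
  have h1 : (1 : ℝ≥0∞) ≤ 4 * μ B := by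
    calc (1 : ℝ≥0∞) = μ Set.univ := (measure_univ).symm
    _ ≤ μ (B ∪ (Prod.map f id ⁻¹' B ∪ (Prod.map id f ⁻¹' B ∪ Prod.map f f ⁻¹' B))) :=
        measure_mono hcover
    _ ≤ μ B + (μ (Prod.map f id ⁻¹' B) + (μ (Prod.map id f ⁻¹' B) + μ (Prod.map f f ⁻¹' B))) := by
        refine le_trans (measure_union_le _ _) ?_
        gcongr
        refine le_trans (measure_union_le _ _) ?_
        gcongr
        exact measure_union_le _ _
    _ = 4 * μ B := by rw [e1, e2, e3]; ring
  have hμB : (1 : ℝ≥0∞) / 4 ≤ μ B := by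
    rw [ENNReal.div_le_iff_le_mul (by norm_num) (by norm_num)]
    calc (1 : ℝ≥0∞) ≤ 4 * μ B := h1
    _ = μ B * 4 := mul_comm _ _
  have hev : ℙ {ω | quadForm M v ≤ bilinForm M (θ ω) (ν ω)} = μ B := by
    rw [← hjoint, Measure.map_apply (hθM.prodMk hνM) hBmeas]
    rfl
  rw [hev]
  refine le_trans (le_of_eq ?_) hμB
  rw [ENNReal.ofReal_div_of_pos (by norm_num)]
  norm_num
end

section
/- Let D be a d×d real diagonal matrix with diagonal entries d_1,...,d_d, let v ∈ R^d, and let β > 0. Let θ and ν be independent Gaussian vectors in R^d, each with mean v and covariance β^{−1} I_d. Then E (θᵀ D ν)² = β^{−2} ‖D‖_F² + (vᵀ D v)² + 2 β^{−1} ‖D v‖_2², where ‖D‖_F is the Frobenius norm and ‖·‖_2 the Euclidean norm. -/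
open MeasureTheory ProbabilityTheory Real
open scoped ENNReal NNReal

section auxGauss

open MeasureTheory ProbabilityTheory Real

lemma aux_int_x_exp {b : ℝ} (hb : 0 < b) : ∫ x : ℝ, x * rexp (-b * x ^ 2) = 0 := by
  have h := integral_neg_eq_self (fun x : ℝ => x * rexp (-b * x ^ 2)) volume
  have h1 : (fun x : ℝ => (-x) * rexp (-b * (-x) ^ 2))
      = fun x : ℝ => -(x * rexp (-b * x ^ 2)) := by
    funext x; rw [neg_sq]; ring
  rw [h1, integral_neg] at h
  linarith

lemma aux_int_sq_exp {b : ℝ} (hb : 0 < b) :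
    ∫ x : ℝ, x ^ 2 * rexp (-b * x ^ 2) = √(π / b) / (2 * b) := by
  have habs : (fun x : ℝ => x ^ 2 * rexp (-b * x ^ 2))
      = fun x : ℝ => |x| ^ 2 * rexp (-b * |x| ^ 2) := by
    funext x; rw [sq_abs]
  rw [habs, integral_comp_abs (f := fun x => x ^ 2 * rexp (-b * x ^ 2))]
  have hcong : ∫ x in Set.Ioi (0:ℝ), x ^ 2 * rexp (-b * x ^ 2)
      = ∫ x in Set.Ioi (0:ℝ), x ^ (2:ℝ) * rexp (-b * x ^ (2:ℝ)) := by
    refine setIntegral_congr_fun measurableSet_Ioi (fun x hx => ?_)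
    rw [show (2:ℝ) = ((2:ℕ):ℝ) by norm_num, rpow_natCast]
  rw [hcong, integral_rpow_mul_exp_neg_mul_rpow two_pos (by norm_num) hb]
  have hG : Gamma (((2:ℝ) + 1) / 2) = √π / 2 := by
    rw [show ((2:ℝ)+1)/2 = 1/2 + 1 by norm_num, Real.Gamma_add_one (by norm_num),
      Real.Gamma_one_half_eq]
    ring
  have hbp : b ^ (-((2:ℝ) + 1) / 2) = (√b)⁻¹ * b⁻¹ := by
    rw [show (-((2:ℝ)+1)/2) = -1 + -(1/2) by norm_num, rpow_add hb, rpow_neg_one,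
      rpow_neg hb.le, ← sqrt_eq_rpow]
    ring
  rw [hG, hbp, Real.sqrt_div pi_pos.le]
  have h1 : √b ≠ 0 := ne_of_gt (Real.sqrt_pos.mpr hb)
  field_simp

section pdf
variable {v : ℝ≥0}

lemma aux_pdf0_eq (v : ℝ≥0) :
    gaussianPDFReal 0 v = fun x => (√(2*π*v))⁻¹ * rexp (-(2*(v:ℝ))⁻¹ * x ^ 2) := by
  funext x
  rw [gaussianPDFReal, sub_zero, neg_div, div_eq_inv_mul, ← neg_mul]

lemma aux_bpos (hv : v ≠ 0) : 0 < (2*(v:ℝ))⁻¹ := by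
  have : 0 < (v:ℝ) := by positivity
  positivity

lemma aux_I1 (hv : v ≠ 0) : Integrable (fun x => gaussianPDFReal 0 v x * x) := by
  have : (fun x => gaussianPDFReal 0 v x * x)
      = fun x => (√(2*π*v))⁻¹ * (x * rexp (-(2*(v:ℝ))⁻¹ * x ^ 2)) := by
    rw [aux_pdf0_eq]; funext x; ring
  rw [this]
  exact (integrable_mul_exp_neg_mul_sq (aux_bpos hv)).const_mul _

lemma aux_I2 (hv : v ≠ 0) : Integrable (fun x => gaussianPDFReal 0 v x * x ^ 2) := by
  have h2 : (fun x : ℝ => x ^ (2:ℝ) * rexp (-(2*(v:ℝ))⁻¹ * x ^ 2))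
      = fun x : ℝ => x ^ 2 * rexp (-(2*(v:ℝ))⁻¹ * x ^ 2) := by
    funext x; rw [show (2:ℝ) = ((2:ℕ):ℝ) by norm_num, rpow_natCast]
  have hint := integrable_rpow_mul_exp_neg_mul_sq (aux_bpos hv) (s := 2) (by norm_num)
  rw [h2] at hint
  have : (fun x => gaussianPDFReal 0 v x * x ^ 2)
      = fun x => (√(2*π*v))⁻¹ * (x ^ 2 * rexp (-(2*(v:ℝ))⁻¹ * x ^ 2)) := by
    rw [aux_pdf0_eq]; funext x; ring
  rw [this]
  exact hint.const_mul _

lemma aux_M1 (hv : v ≠ 0) : ∫ x, gaussianPDFReal 0 v x * x = 0 := by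
  have : (fun x => gaussianPDFReal 0 v x * x)
      = fun x => (√(2*π*v))⁻¹ * (x * rexp (-(2*(v:ℝ))⁻¹ * x ^ 2)) := by
    rw [aux_pdf0_eq]; funext x; ring
  rw [this, integral_const_mul, aux_int_x_exp (aux_bpos hv), mul_zero]

lemma aux_M2 (hv : v ≠ 0) : ∫ x, gaussianPDFReal 0 v x * x ^ 2 = v := by
  have : (fun x => gaussianPDFReal 0 v x * x ^ 2)
      = fun x => (√(2*π*v))⁻¹ * (x ^ 2 * rexp (-(2*(v:ℝ))⁻¹ * x ^ 2)) := by
    rw [aux_pdf0_eq]; funext x; ring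
  have hvpos : 0 < (v:ℝ) := by positivity
  rw [this, integral_const_mul, aux_int_sq_exp (aux_bpos hv)]
  rw [show π / (2*(v:ℝ))⁻¹ = 2*π*v by field_simp,
    show 2 * (2*(v:ℝ))⁻¹ = (v:ℝ)⁻¹ by field_simp]
  have hs : √(2*π*(v:ℝ)) ≠ 0 := by positivity
  field_simp

end pdf

section gen
variable {v : ℝ≥0} {m : ℝ}

lemma aux_GM (g : ℝ → ℝ) :
    ∫ x, gaussianPDFReal m v x * g x = ∫ y, gaussianPDFReal 0 v y * g (y + m) := by
  rw [← integral_sub_right_eq_self (μ := volume)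
    (fun y => gaussianPDFReal 0 v y * g (y + m)) m]
  congr 1
  funext x
  rw [gaussianPDFReal_sub, zero_add, sub_add_cancel]

lemma aux_GI (g : ℝ → ℝ)
    (hF : Integrable (fun y => gaussianPDFReal 0 v y * g (y + m))) :
    Integrable (fun x => gaussianPDFReal m v x * g x) := by
  refine (hF.comp_sub_right m).congr (Filter.Eventually.of_forall fun x => ?_)
  show gaussianPDFReal 0 v (x - m) * g (x - m + m) = _
  rw [gaussianPDFReal_sub, zero_add, sub_add_cancel]

lemma aux_F1 (hv : v ≠ 0) :
    Integrable (fun y => gaussianPDFReal 0 v y * (y + m)) := by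
  have h : (fun y => gaussianPDFReal 0 v y * (y + m))
      = fun y => gaussianPDFReal 0 v y * y + gaussianPDFReal 0 v y * m := by
    funext y; ring
  rw [h]
  exact (aux_I1 hv).add ((integrable_gaussianPDFReal 0 v).mul_const m)

lemma aux_F2 (hv : v ≠ 0) :
    Integrable (fun y => gaussianPDFReal 0 v y * (y + m) ^ 2) := by
  have h : (fun y => gaussianPDFReal 0 v y * (y + m) ^ 2)
      = fun y => (gaussianPDFReal 0 v y * y ^ 2 + (2*m) * (gaussianPDFReal 0 v y * y))
          + m ^ 2 * gaussianPDFReal 0 v y := by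
    funext y; ring
  rw [h]
  exact ((aux_I2 hv).add ((aux_I1 hv).const_mul (2*m))).add
    ((integrable_gaussianPDFReal 0 v).const_mul (m ^ 2))

lemma aux_GI1 (hv : v ≠ 0) : Integrable (fun x => gaussianPDFReal m v x * x) :=
  aux_GI (fun x => x) (aux_F1 hv)

lemma aux_GI2 (hv : v ≠ 0) : Integrable (fun x => gaussianPDFReal m v x * x ^ 2) :=
  aux_GI (fun x => x ^ 2) (aux_F2 hv)

lemma aux_GM1 (hv : v ≠ 0) : ∫ x, gaussianPDFReal m v x * x = m := by
  rw [aux_GM (fun x => x)]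
  have h : (fun y => gaussianPDFReal 0 v y * (y + m))
      = fun y => gaussianPDFReal 0 v y * y + gaussianPDFReal 0 v y * m := by
    funext y; ring
  rw [show (∫ y, gaussianPDFReal 0 v y * (y + m))
      = ∫ y, (gaussianPDFReal 0 v y * y + gaussianPDFReal 0 v y * m) by rw [← h]]
  rw [integral_add (aux_I1 hv) ((integrable_gaussianPDFReal 0 v).mul_const m),
    aux_M1 hv, integral_mul_const, integral_gaussianPDFReal_eq_one 0 hv]
  ring

lemma aux_GM2 (hv : v ≠ 0) : ∫ x, gaussianPDFReal m v x * x ^ 2 = m ^ 2 + v := by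
  rw [aux_GM (fun x => x ^ 2)]
  have h : (fun y => gaussianPDFReal 0 v y * (y + m) ^ 2)
      = fun y => (gaussianPDFReal 0 v y * y ^ 2 + (2*m) * (gaussianPDFReal 0 v y * y))
          + m ^ 2 * gaussianPDFReal 0 v y := by
    funext y; ring
  rw [show (∫ y, gaussianPDFReal 0 v y * (y + m) ^ 2)
      = ∫ y, ((gaussianPDFReal 0 v y * y ^ 2 + (2*m) * (gaussianPDFReal 0 v y * y))
          + m ^ 2 * gaussianPDFReal 0 v y) by rw [← h]]
  have hAB : Integrable (fun y => gaussianPDFReal 0 v y * y ^ 2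
      + 2 * m * (gaussianPDFReal 0 v y * y)) :=
    (aux_I2 hv).add ((aux_I1 hv).const_mul (2*m))
  rw [integral_add hAB ((integrable_gaussianPDFReal 0 v).const_mul (m ^ 2)),
    integral_add (aux_I2 hv) ((aux_I1 hv).const_mul (2*m)),
    aux_M2 hv, integral_const_mul, integral_const_mul, aux_M1 hv,
    integral_gaussianPDFReal_eq_one 0 hv]
  ring

end gen

lemma aux_transfer {m : ℝ} {v : ℝ≥0} (hv : v ≠ 0) (g : ℝ → ℝ)
    (hint : Integrable (fun x => gaussianPDFReal m v x * g x)) :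
    Integrable g (gaussianReal m v) ∧
      ∫ x, g x ∂(gaussianReal m v) = ∫ x, gaussianPDFReal m v x * g x := by
  have hd : gaussianReal m v
      = volume.withDensity (fun x => ((gaussianPDFReal m v x).toNNReal : ℝ≥0∞)) := by
    rw [gaussianReal_of_var_ne_zero m hv]; rfl
  have hsmul : (fun x => (gaussianPDFReal m v x).toNNReal • g x)
      = fun x => gaussianPDFReal m v x * g x := by
    funext x
    rw [NNReal.smul_def, Real.coe_toNNReal _ (gaussianPDFReal_nonneg m v x)]
    rfl
  constructor
  · rw [hd, integrable_withDensity_iff_integrable_smul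
      (measurable_gaussianPDFReal m v).real_toNNReal, hsmul]
    exact hint
  · rw [hd, integral_withDensity_eq_integral_smul
      (measurable_gaussianPDFReal m v).real_toNNReal g, hsmul]

lemma aux_moments {Ω : Type*} [MeasureSpace Ω] {X : Ω → ℝ} (hX : Measurable X)
    {m : ℝ} {v : ℝ≥0} (hv : v ≠ 0) (hmap : Measure.map X ℙ = gaussianReal m v) :
    (Integrable X ℙ ∧ ∫ ω, X ω = m) ∧
      (Integrable (fun ω => X ω * X ω) ℙ ∧ ∫ ω, X ω * X ω = m ^ 2 + v) := by
  have h1 := aux_transfer (m := m) hv (fun x => x) (aux_GI1 hv)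
  have hsq : (fun x => gaussianPDFReal m v x * (x * x))
      = fun x => gaussianPDFReal m v x * x ^ 2 := by funext x; ring
  have h2int : Integrable (fun x => gaussianPDFReal m v x * (x * x)) := by
    rw [hsq]; exact aux_GI2 hv
  have h2 := aux_transfer (m := m) hv (fun x => x * x) h2int
  have hm1 : Integrable (fun x : ℝ => x) (Measure.map X ℙ) := by rw [hmap]; exact h1.1
  have hm2 : Integrable (fun x : ℝ => x * x) (Measure.map X ℙ) := by rw [hmap]; exact h2.1
  have he1 : ∫ x, x ∂(Measure.map X ℙ) = ∫ x, gaussianPDFReal m v x * x := by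
    rw [hmap]; exact h1.2
  have he2 : ∫ x, x * x ∂(Measure.map X ℙ) = ∫ x, gaussianPDFReal m v x * x ^ 2 := by
    rw [hmap, ← hsq]; exact h2.2
  refine ⟨⟨?_, ?_⟩, ?_, ?_⟩
  · exact (integrable_map_measure aestronglyMeasurable_id hX.aemeasurable).mp hm1
  · have e1 : ∫ x, x ∂(Measure.map X ℙ) = ∫ ω, X ω ∂ℙ :=
      integral_map hX.aemeasurable aestronglyMeasurable_id
    exact e1.symm.trans (he1.trans (aux_GM1 hv))
  · exact (integrable_map_measure (measurable_id.mul measurable_id).aestronglyMeasurable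
      hX.aemeasurable).mp hm2
  · have e2 : ∫ x, x * x ∂(Measure.map X ℙ) = ∫ ω, X ω * X ω ∂ℙ :=
      integral_map hX.aemeasurable (measurable_id.mul measurable_id).aestronglyMeasurable
    exact e2.symm.trans (he2.trans (aux_GM2 hv))

end auxGauss

/-- If `θ, ν` are independent Gaussian vectors in `ℝ^d`, each with mean `v` and
covariance `β⁻¹ I_d`, and `D` is the diagonal matrix with entries `dd`, then
`E (θᵀ D ν)² = β⁻² ‖D‖_F² + (vᵀ D v)² + 2 β⁻¹ ‖D v‖₂²`. -/
theorem statement_10 {Ω : Type*} [MeasureSpace Ω] [IsProbabilityMeasure (ℙ : Measure Ω)]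
    {d : ℕ} (dd : Fin d → ℝ) (v : Fin d → ℝ) (β : ℝ) (hβ : 0 < β)
    (θ ν : Ω → Fin d → ℝ)
    (hθ : IsGaussianVecIndep v (β⁻¹).toNNReal θ)
    (hν : IsGaussianVecIndep v (β⁻¹).toNNReal ν)
    (hind : IndepFun θ ν) :
    (∫ ω, (bilinForm (Matrix.diagonal dd) (θ ω) (ν ω)) ^ 2) =
      β⁻¹ ^ 2 * (∑ i, (dd i) ^ 2) + (quadForm (Matrix.diagonal dd) v) ^ 2
        + 2 * β⁻¹ * (∑ i, (dd i * v i) ^ 2) := by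
  classical
  have hβi : 0 < β⁻¹ := inv_pos.mpr hβ
  have hv0 : (β⁻¹).toNNReal ≠ 0 := (Real.toNNReal_pos.mpr hβi).ne'
  have hsc : (((β⁻¹).toNNReal : ℝ≥0) : ℝ) = β⁻¹ := Real.coe_toNNReal _ hβi.le
  obtain ⟨hθmeas, hθmap, hθindep⟩ := hθ
  obtain ⟨hνmeas, hνmap, hνindep⟩ := hν
  set S : Fin d → Fin d → ℝ := fun i j => v i * v j + if i = j then β⁻¹ else 0 with hS
  have hcov : ∀ (X : Ω → Fin d → ℝ), (∀ i, Measurable fun ω => X ω i) →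
      (∀ i, Measure.map (fun ω => X ω i) ℙ = gaussianReal (v i) (β⁻¹).toNNReal) →
      iIndepFun (fun i ω => X ω i) ℙ →
      ∀ i j, Integrable (fun ω => X ω i * X ω j) ℙ ∧ (∫ ω, X ω i * X ω j) = S i j := by
    intro X hmeas hmap hidp i j
    by_cases hij : i = j
    · subst hij
      have h := (aux_moments (hmeas i) hv0 (hmap i)).2
      refine ⟨h.1, ?_⟩
      rw [h.2, hsc, hS]
      simp only [eq_self_iff_true, if_true]
      ring
    · have hind2 : IndepFun (fun ω => X ω i) (fun ω => X ω j) ℙ := hidp.indepFun hij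
      have hi := (aux_moments (hmeas i) hv0 (hmap i)).1
      have hj := (aux_moments (hmeas j) hv0 (hmap j)).1
      refine ⟨hind2.integrable_mul hi.1 hj.1, ?_⟩
      have hmul : (∫ ω, X ω i * X ω j) = (∫ ω, X ω i) * ∫ ω, X ω j :=
        hind2.integral_fun_mul_eq_mul_integral hi.1.aestronglyMeasurable hj.1.aestronglyMeasurable
      rw [hmul, hi.2, hj.2, hS]
      simp [hij]
  have hθcov := hcov θ hθmeas hθmap hθindep
  have hνcov := hcov ν hνmeas hνmap hνindep
  have hPQ : ∀ i j : Fin d, IndepFun (fun ω => θ ω i * θ ω j) (fun ω => ν ω i * ν ω j) ℙ :=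
    fun i j => hind.comp ((measurable_pi_apply i).mul (measurable_pi_apply j))
      ((measurable_pi_apply i).mul (measurable_pi_apply j))
  have hint : ∀ i j : Fin d, Integrable
      (fun ω => (dd i * dd j) * ((θ ω i * θ ω j) * (ν ω i * ν ω j))) ℙ := by
    intro i j
    have h : Integrable (fun ω => (θ ω i * θ ω j) * (ν ω i * ν ω j)) ℙ :=
      (hPQ i j).integrable_mul (hθcov i j).1 (hνcov i j).1
    exact h.const_mul _
  have hbil : ∀ ω, bilinForm (Matrix.diagonal dd) (θ ω) (ν ω) ^ 2
      = ∑ i, ∑ j, (dd i * dd j) * ((θ ω i * θ ω j) * (ν ω i * ν ω j)) := by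
    intro ω
    have h1 : bilinForm (Matrix.diagonal dd) (θ ω) (ν ω)
        = ∑ i, dd i * (θ ω i * ν ω i) := by
      unfold bilinForm
      refine Finset.sum_congr rfl fun i _ => ?_
      rw [Finset.sum_eq_single i]
      · rw [Matrix.diagonal_apply_eq]; ring
      · intro j _ hj
        rw [Matrix.diagonal_apply_ne _ (Ne.symm hj)]; ring
      · intro h; exact absurd (Finset.mem_univ i) h
    rw [h1, sq, Finset.sum_mul_sum]
    exact Finset.sum_congr rfl fun i _ => Finset.sum_congr rfl fun j _ => by ring
  have hquad : quadForm (Matrix.diagonal dd) v = ∑ i, dd i * v i ^ 2 := by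
    unfold quadForm bilinForm
    refine Finset.sum_congr rfl fun i _ => ?_
    rw [Finset.sum_eq_single i]
    · rw [Matrix.diagonal_apply_eq]; ring
    · intro j _ hj
      rw [Matrix.diagonal_apply_ne _ (Ne.symm hj)]; ring
    · intro h; exact absurd (Finset.mem_univ i) h
  calc (∫ ω, bilinForm (Matrix.diagonal dd) (θ ω) (ν ω) ^ 2)
      = ∫ ω, ∑ i, ∑ j, (dd i * dd j) * ((θ ω i * θ ω j) * (ν ω i * ν ω j)) := by
        simp_rw [hbil]
    _ = ∑ i, ∑ j, ∫ ω, (dd i * dd j) * ((θ ω i * θ ω j) * (ν ω i * ν ω j)) := by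
        rw [integral_finset_sum _ fun i _ => integrable_finset_sum _ fun j _ => hint i j]
        exact Finset.sum_congr rfl fun i _ => integral_finset_sum _ fun j _ => hint i j
    _ = ∑ i, ∑ j, (dd i * dd j) * (S i j * S i j) := by
        refine Finset.sum_congr rfl fun i _ => Finset.sum_congr rfl fun j _ => ?_
        have hmul : (∫ ω, (θ ω i * θ ω j) * (ν ω i * ν ω j))
            = (∫ ω, θ ω i * θ ω j) * ∫ ω, ν ω i * ν ω j :=
          (hPQ i j).integral_fun_mul_eq_mul_integral (hθcov i j).1.aestronglyMeasurable
            (hνcov i j).1.aestronglyMeasurable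
        rw [integral_const_mul, hmul, (hθcov i j).2, (hνcov i j).2]
    _ = β⁻¹ ^ 2 * (∑ i, (dd i) ^ 2) + (quadForm (Matrix.diagonal dd) v) ^ 2
        + 2 * β⁻¹ * (∑ i, (dd i * v i) ^ 2) := by
        have h1 : ∀ i j : Fin d, (dd i * dd j) * (S i j * S i j)
            = (dd i * v i ^ 2) * (dd j * v j ^ 2)
              + (if i = j then 2 * β⁻¹ * (dd i * v i) ^ 2 + β⁻¹ ^ 2 * dd i ^ 2 else 0) := by
          intro i j
          rw [hS]
          by_cases hij : i = j
          · subst hij; simp only [eq_self_iff_true, if_true]; ring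
          · simp only [if_neg hij]; ring
        simp_rw [h1, Finset.sum_add_distrib, Finset.sum_ite_eq, Finset.mem_univ, if_true]
        rw [← Finset.sum_mul_sum, Finset.sum_add_distrib, ← Finset.mul_sum, ← Finset.mul_sum,
          hquad]
        ring
end

section
/- There exists an absolute constant C > 0 such that the following holds. Let X be a zero-mean random vector in R^d with covariance matrix Σ satisfying the L4-L2 moment equivalence with constant κ, let p ∈ (0,1], β > 0, v ∈ S^{d−1}, and let Y = X ⊙ p. Then E Σ_{i≠j≠l} ⟨Y,e_i⟩² ⟨Y,e_j⟩ ⟨Y,e_l⟩ β^{−1} v_j v_l ≤ C p³ κ⁴ ( ‖Σ‖² + β^{−2} tr(Σ)² + β^{−1} ‖Σ‖ tr(Σ) ), where the sum is over triples of pairwise distinct indices i, j, l ∈ {1,...,d} with j ≠ l, and ‖·‖ is the operator norm. -/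
open MeasureTheory ProbabilityTheory Real
open scoped ENNReal NNReal

/-! ### Auxiliary lemmas -/

lemma aux_cs {Ω : Type*} [MeasureSpace Ω] (f g : Ω → ℝ)
    (hf : AEStronglyMeasurable f (ℙ : Measure Ω)) (hg : AEStronglyMeasurable g (ℙ : Measure Ω))
    (hf2 : Integrable (fun ω => f ω ^ 2) (ℙ : Measure Ω))
    (hg2 : Integrable (fun ω => g ω ^ 2) (ℙ : Measure Ω)) :
    |∫ ω, f ω * g ω| ≤ Real.sqrt (∫ ω, f ω ^ 2) * Real.sqrt (∫ ω, g ω ^ 2) := by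
  have hconj : (2 : ℝ).HolderConjugate 2 := Real.HolderConjugate.two_two
  have habs : ∀ (h : Ω → ℝ), (fun ω => |h ω| ^ (2:ℝ)) = fun ω => h ω ^ 2 := by
    intro h; funext ω
    rw [show ((2:ℝ) = ((2:ℕ):ℝ)) by norm_num, Real.rpow_natCast, sq_abs]
  have hfm : MemLp (fun ω => |f ω|) (ENNReal.ofReal 2) (ℙ : Measure Ω) := by
    rw [show ENNReal.ofReal 2 = 2 by simp]
    refine (memLp_two_iff_integrable_sq (by simpa [Real.norm_eq_abs] using hf.norm)).mpr ?_
    simpa [sq_abs] using hf2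
  have hgm : MemLp (fun ω => |g ω|) (ENNReal.ofReal 2) (ℙ : Measure Ω) := by
    rw [show ENNReal.ofReal 2 = 2 by simp]
    refine (memLp_two_iff_integrable_sq (by simpa [Real.norm_eq_abs] using hg.norm)).mpr ?_
    simpa [sq_abs] using hg2
  have h2 := integral_mul_le_Lp_mul_Lq_of_nonneg hconj
      (Filter.Eventually.of_forall (fun ω => abs_nonneg (f ω)))
      (Filter.Eventually.of_forall (fun ω => abs_nonneg (g ω))) hfm hgm
  rw [habs f, habs g] at h2
  calc |∫ ω, f ω * g ω| ≤ ∫ ω, |f ω| * |g ω| := by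
        simpa [Real.norm_eq_abs, abs_mul] using
          norm_integral_le_integral_norm (μ := (ℙ : Measure Ω)) (fun ω => f ω * g ω)
    _ ≤ (∫ ω, f ω ^ 2) ^ ((1:ℝ)/2) * (∫ ω, g ω ^ 2) ^ ((1:ℝ)/2) := h2
    _ = Real.sqrt (∫ ω, f ω ^ 2) * Real.sqrt (∫ ω, g ω ^ 2) := by
        rw [Real.sqrt_eq_rpow, Real.sqrt_eq_rpow]

lemma aux_pow4 {a b κ : ℝ} (ha : 0 ≤ a) (hb : 0 ≤ b) (hκ : 0 ≤ κ)
    (h : a ^ ((1:ℝ)/4) ≤ κ * b ^ ((1:ℝ)/2)) : a ≤ κ ^ 4 * b ^ 2 := by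
  have h4 : (a ^ ((1:ℝ)/4)) ^ (4:ℕ) ≤ (κ * b ^ ((1:ℝ)/2)) ^ (4:ℕ) := by
    exact pow_le_pow_left₀ (Real.rpow_nonneg ha _) h 4
  rw [← Real.rpow_natCast (a ^ ((1:ℝ)/4)) 4, ← Real.rpow_mul ha] at h4
  norm_num at h4
  calc a ≤ (κ * b ^ ((1:ℝ)/2)) ^ (4:ℕ) := h4
    _ = κ ^ 4 * (b ^ ((1:ℝ)/2)) ^ (4:ℕ) := by rw [mul_pow]
    _ = κ ^ 4 * b ^ 2 := by
        rw [← Real.rpow_natCast (b ^ ((1:ℝ)/2)) 4, ← Real.rpow_mul hb,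
          show ((1:ℝ)/2 * ((4:ℕ):ℝ)) = ((2:ℕ):ℝ) by norm_num, Real.rpow_natCast]

lemma aux_quad {d : ℕ} (M : Matrix (Fin d) (Fin d) ℝ) (v : Fin d → ℝ)
    (hv : ∑ i, v i ^ 2 = 1) : quadForm M v ≤ opNorm M := by
  set T := LinearMap.toContinuousLinearMap (Matrix.toEuclideanLin M) with hT
  set v' : EuclideanSpace ℝ (Fin d) := (WithLp.equiv 2 (Fin d → ℝ)).symm v with hv'
  have hnorm : ‖v'‖ = 1 := by
    rw [EuclideanSpace.norm_eq]
    simp only [hv', WithLp.equiv_symm_apply, PiLp.toLp_apply, Real.norm_eq_abs, sq_abs]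
    rw [hv]; exact Real.sqrt_one
  have happ : T v' = (WithLp.equiv 2 (Fin d → ℝ)).symm (M.mulVec v) := by
    rw [hT]
    simp only [LinearMap.coe_toContinuousLinearMap']
    exact Matrix.toEuclideanLin_apply_piLp_toLp M v
  have hinner : (inner ℝ v' (T v') : ℝ) = quadForm M v := by
    rw [happ]
    simp only [PiLp.inner_apply, RCLike.inner_apply, conj_trivial,
      WithLp.equiv_symm_apply, PiLp.toLp_apply, hv']
    unfold quadForm bilinForm
    refine Finset.sum_congr rfl fun i _ => ?_
    simp [Matrix.mulVec, dotProduct, Finset.mul_sum]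
    rw [Finset.sum_mul]
    refine Finset.sum_congr rfl fun j _ => by ring
  calc quadForm M v = inner ℝ v' (T v') := hinner.symm
    _ ≤ ‖v'‖ * ‖T v'‖ := real_inner_le_norm v' (T v')
    _ ≤ ‖v'‖ * (‖T‖ * ‖v'‖) := by
        exact mul_le_mul_of_nonneg_left (T.le_opNorm v') (norm_nonneg v')
    _ = opNorm M := by rw [hnorm, opNorm, ← hT]; ring

lemma aux_bern1 {Ω : Type} [MeasureSpace Ω] {d : ℕ} {p : ℝ} (hp : 0 ≤ p)
    {ε : Ω → Fin d → ℝ} (h01 : ∀ ω i, ε ω i = 0 ∨ ε ω i = 1)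
    (hm : ∀ i, Measurable fun ω => ε ω i)
    (hP : ∀ i, (ℙ : Measure Ω) {ω | ε ω i = 1} = ENNReal.ofReal p)
    (k : Fin d) : ∫ ω, ε ω k = p := by
  have hA : MeasurableSet {ω | ε ω k = 1} := (hm k) (measurableSet_singleton 1)
  have heq : (fun ω => ε ω k) = Set.indicator {ω | ε ω k = 1} (fun _ => (1:ℝ)) := by
    funext ω
    rcases h01 ω k with h | h <;> simp [Set.indicator, h]
  rw [heq, integral_indicator_const (1:ℝ) hA, measureReal_def, hP k, smul_eq_mul, mul_one,
    ENNReal.toReal_ofReal hp]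

lemma aux_bern3 {Ω : Type} [MeasureSpace Ω] [IsProbabilityMeasure (ℙ : Measure Ω)]
    {d : ℕ} {p : ℝ} (hp : 0 ≤ p) {ε : Ω → Fin d → ℝ}
    (h01 : ∀ ω i, ε ω i = 0 ∨ ε ω i = 1)
    (hm : ∀ i, Measurable fun ω => ε ω i)
    (hP : ∀ i, (ℙ : Measure Ω) {ω | ε ω i = 1} = ENNReal.ofReal p)
    (hind : iIndepFun (fun i ω => ε ω i) (ℙ : Measure Ω))
    {i j l : Fin d} (hij : i ≠ j) (hjl : j ≠ l) (hil : i ≠ l) :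
    ∫ ω, ε ω i * ε ω j * ε ω l = p ^ 3 := by
  set f : Fin d → Ω → ℝ := fun i ω => ε ω i with hf
  have hl : l ∉ ({i, j} : Finset (Fin d)) := by simp [hil.symm, hjl.symm, Ne]
  have h2 : IndepFun (∏ k ∈ ({i, j} : Finset (Fin d)), f k) (f l) ℙ :=
    hind.indepFun_finsetProd_of_notMem hm hl
  have hpair : (∏ k ∈ ({i, j} : Finset (Fin d)), f k) = f i * f j :=
    Finset.prod_pair hij
  rw [hpair] at h2
  have hij' : IndepFun (f i) (f j) ℙ := hind.indepFun hij
  calc ∫ ω, ε ω i * ε ω j * ε ω l = integral ℙ ((f i * f j) * f l) := rfl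
    _ = integral ℙ (f i * f j) * integral ℙ (f l) :=
        h2.integral_mul_eq_mul_integral (((hm i).mul (hm j))).aestronglyMeasurable
          (hm l).aestronglyMeasurable
    _ = (integral ℙ (f i) * integral ℙ (f j)) * integral ℙ (f l) := by
        rw [hij'.integral_mul_eq_mul_integral (hm i).aestronglyMeasurable (hm j).aestronglyMeasurable]
    _ = p ^ 3 := by
        rw [show integral ℙ (f i) = p from aux_bern1 hp h01 hm hP i,
          show integral ℙ (f j) = p from aux_bern1 hp h01 hm hP j,
          show integral ℙ (f l) = p from aux_bern1 hp h01 hm hP l]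
        ring

set_option maxHeartbeats 1000000 in
/-- There is an absolute constant `C > 0` such that if `X` is zero-mean with
covariance `Σ` satisfying `L₄-L₂` with constant `κ`, `Y = X ⊙ p`, `β > 0` and `v ∈ S^{d-1}`,
then `E Σ_{i≠j≠l} ⟨Y,e_i⟩² ⟨Y,e_j⟩ ⟨Y,e_l⟩ β⁻¹ v_j v_l ≤
C p³ κ⁴ (‖Σ‖² + β⁻² tr(Σ)² + β⁻¹ ‖Σ‖ tr(Σ))`, the sum ranging over pairwise distinct
triples `(i,j,l)`. -/
theorem statement_14 :
    ∃ C : ℝ, 0 < C ∧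
      ∀ (Ω : Type) [MeasureSpace Ω] [IsProbabilityMeasure (ℙ : Measure Ω)]
        (d : ℕ) (X ε Y : Ω → Fin d → ℝ) (S : Matrix (Fin d) (Fin d) ℝ)
        (κ p β : ℝ) (v : Fin d → ℝ),
        ZeroMean X → IsCov X S → FiniteFourthMoments X → 1 ≤ κ → L4L2 X κ →
        p ∈ Set.Ioc (0 : ℝ) 1 → 0 < β → v ∈ unitSphere d →
        IsSparsified p X ε Y →
        (∫ ω, ∑ i, ∑ j, ∑ l,
            if i ≠ j ∧ j ≠ l ∧ i ≠ l then
              (Y ω i) ^ 2 * Y ω j * Y ω l * β⁻¹ * v j * v l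
            else 0) ≤
          C * p ^ 3 * κ ^ 4 * ((opNorm S) ^ 2 + β⁻¹ ^ 2 * S.trace ^ 2
            + β⁻¹ * opNorm S * S.trace) := by
  refine ⟨8, by norm_num, ?_⟩
  intro Ω _ _ d X ε Y S κ p β v hZM hCov h4 hκ hL4 hp hβ hv hsp
  obtain ⟨⟨h01, hεm, hεP, hεiid⟩, hXm, hXε, hYdef⟩ := hsp
  have hκ0 : (0:ℝ) ≤ κ := le_trans zero_le_one hκ
  have hp0 : (0:ℝ) ≤ p := hp.1.le
  have hβ0 : (0:ℝ) ≤ β⁻¹ := inv_nonneg.mpr hβ.le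
  have hXim : ∀ i : Fin d, Measurable fun ω => X ω i :=
    fun i => (measurable_pi_apply i).comp hXm
  have hvs : ∑ i, v i ^ 2 = 1 := hv
  -- integrability facts
  have hIsq : ∀ i j : Fin d, Integrable (fun ω => (X ω i * X ω j)^2) := by
    intro i j
    have e : (fun ω => (X ω i * X ω j)^2) = fun ω => X ω i * X ω j * X ω i * X ω j := by
      funext ω; ring
    rw [e]; exact h4 i j i j
  have hI2 : ∀ i j : Fin d, Integrable (fun ω => X ω i * X ω j) := by
    intro i j
    have hb : Integrable (fun ω => (1 + (X ω i * X ω j)^2)/2) :=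
      ((integrable_const (1:ℝ)).add (hIsq i j)).div_const 2
    refine hb.mono' ((hXim i).mul (hXim j)).aestronglyMeasurable ?_
    refine Filter.Eventually.of_forall fun ω => ?_
    rw [Real.norm_eq_abs]
    nlinarith [sq_nonneg (|X ω i * X ω j| - 1), sq_abs (X ω i * X ω j),
      abs_nonneg (X ω i * X ω j)]
  have hIsq2 : ∀ i : Fin d, Integrable (fun ω => ((X ω i)^2)^2) := by
    intro i
    have e : (fun ω => ((X ω i)^2)^2) = fun ω => X ω i * X ω i * X ω i * X ω i := by
      funext ω; ring
    rw [e]; exact h4 i i i i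
  have hIX22 : ∀ i j : Fin d, Integrable (fun ω => (X ω i)^2 * (X ω j)^2) := by
    intro i j
    have e : (fun ω => (X ω i)^2 * (X ω j)^2) = fun ω => X ω i * X ω i * X ω j * X ω j := by
      funext ω; ring
    rw [e]; exact h4 i i j j
  have hIX3 : ∀ i j l : Fin d, Integrable (fun ω => (X ω i)^2 * X ω j * X ω l) := by
    intro i j l
    have e : (fun ω => (X ω i)^2 * X ω j * X ω l) = fun ω => X ω i * X ω i * X ω j * X ω l := by
      funext ω; ring
    rw [e]; exact h4 i i j l
  -- covariance facts
  have hSdiag : ∀ i, S i i = ∫ ω, (X ω i)^2 := by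
    intro i; rw [hCov i i]
    exact integral_congr_ae (Filter.Eventually.of_forall fun ω => by ring)
  have hSd0 : ∀ i, 0 ≤ S i i := by
    intro i; rw [hSdiag i]; exact integral_nonneg fun ω => sq_nonneg _
  have htr : S.trace = ∑ i, S i i := by simp [Matrix.trace, Matrix.diag]
  have htr0 : 0 ≤ S.trace := by
    rw [htr]; exact Finset.sum_nonneg fun i _ => hSd0 i
  have hnrm0 : 0 ≤ opNorm S := norm_nonneg _
  have hqle : quadForm S v ≤ opNorm S := aux_quad S v hvs
  have hdiag_le : ∀ i, S i i ≤ opNorm S := by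
    intro i
    set e : Fin d → ℝ := fun j => if j = i then 1 else 0 with he
    have h1 : quadForm S e = S i i := by
      simp [quadForm, bilinForm, he, ite_mul, mul_ite, Finset.sum_ite_eq',
        Finset.mem_univ]
    have h2 : ∑ j, e j ^ 2 = 1 := by
      simp [he, ite_pow, Finset.sum_ite_eq', Finset.mem_univ]
    calc S i i = quadForm S e := h1.symm
      _ ≤ opNorm S := aux_quad S _ h2
  -- fourth moment bounds
  have hm4 : ∀ i, ∫ ω, ((X ω i)^2)^2 ≤ κ^4 * (S i i)^2 := by
    intro i
    set e : Fin d → ℝ := fun j => if j = i then 1 else 0 with he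
    have hsph : e ∈ unitSphere d := by
      show ∑ j, e j ^ 2 = 1
      simp [he, ite_pow, Finset.sum_ite_eq', Finset.mem_univ]
    have h := hL4 _ hsph
    have hdot : ∀ ω : Ω, (∑ j, X ω j * e j) = X ω i := by
      intro ω; simp [he, mul_ite, Finset.sum_ite_eq', Finset.mem_univ]
    simp only [hdot] at h
    have h4' : ∫ ω, |X ω i|^4 ≤ κ^4 * (∫ ω, |X ω i|^2)^2 :=
      aux_pow4 (integral_nonneg fun ω => pow_nonneg (abs_nonneg _) _)
        (integral_nonneg fun ω => pow_nonneg (abs_nonneg _) _) hκ0 h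
    have e1 : (fun ω => |X ω i|^4) = fun ω => ((X ω i)^2)^2 := by
      funext ω; rw [show (4:ℕ) = 2*2 from rfl, pow_mul, sq_abs]
    have e2 : (fun ω => |X ω i|^2) = fun ω => (X ω i)^2 := by
      funext ω; exact sq_abs _
    rw [e1, e2, ← hSdiag i] at h4'
    exact h4'
  have hsqrt4 : ∀ i, Real.sqrt (∫ ω, ((X ω i)^2)^2) ≤ κ^2 * S i i := by
    intro i
    refine le_trans (Real.sqrt_le_sqrt (hm4 i)) ?_
    rw [show κ^4 * (S i i)^2 = (κ^2 * S i i)^2 by ring,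
      Real.sqrt_sq (mul_nonneg (sq_nonneg κ) (hSd0 i))]
  have hm22 : ∀ i j, ∫ ω, (X ω i)^2 * (X ω j)^2 ≤ κ^4 * (S i i * S j j) := by
    intro i j
    have hcs := aux_cs (fun ω => (X ω i)^2) (fun ω => (X ω j)^2)
      ((hXim i).pow_const 2).aestronglyMeasurable
      ((hXim j).pow_const 2).aestronglyMeasurable (hIsq2 i) (hIsq2 j)
    calc ∫ ω, (X ω i)^2 * (X ω j)^2 ≤ |∫ ω, (X ω i)^2 * (X ω j)^2| := le_abs_self _
      _ ≤ Real.sqrt (∫ ω, ((X ω i)^2)^2) * Real.sqrt (∫ ω, ((X ω j)^2)^2) := hcs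
      _ ≤ (κ^2 * S i i) * (κ^2 * S j j) := by
          exact mul_le_mul (hsqrt4 i) (hsqrt4 j) (Real.sqrt_nonneg _)
            (mul_nonneg (sq_nonneg κ) (hSd0 i))
      _ = κ^4 * (S i i * S j j) := by ring
  have hm3 : ∀ i k, |∫ ω, (X ω i)^2 * (X ω i * X ω k)| ≤
      κ^4 * (S i i * Real.sqrt (S i i) * Real.sqrt (S k k)) := by
    intro i k
    have hcs := aux_cs (fun ω => (X ω i)^2) (fun ω => X ω i * X ω k)
      ((hXim i).pow_const 2).aestronglyMeasurable
      ((hXim i).mul (hXim k)).aestronglyMeasurable (hIsq2 i) (hIsq i k)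
    refine hcs.trans ?_
    have h1 : ∫ ω, (X ω i * X ω k)^2 ≤ κ^4 * (S i i * S k k) := by
      refine le_trans (le_of_eq (integral_congr_ae
        (Filter.Eventually.of_forall fun ω => by ring))) (hm22 i k)
    have h2 : Real.sqrt (∫ ω, (X ω i * X ω k)^2) ≤
        κ^2 * (Real.sqrt (S i i) * Real.sqrt (S k k)) := by
      refine le_trans (Real.sqrt_le_sqrt h1) ?_
      rw [show κ^4 * (S i i * S k k) = (κ^2)^2 * (S i i * S k k) by ring,
        Real.sqrt_mul (sq_nonneg _), Real.sqrt_sq (sq_nonneg κ),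
        Real.sqrt_mul (hSd0 i)]
    calc Real.sqrt (∫ ω, ((X ω i)^2)^2) * Real.sqrt (∫ ω, (X ω i * X ω k)^2)
        ≤ (κ^2 * S i i) * (κ^2 * (Real.sqrt (S i i) * Real.sqrt (S k k))) := by
          exact mul_le_mul (hsqrt4 i) h2 (Real.sqrt_nonneg _)
            (mul_nonneg (sq_nonneg κ) (hSd0 i))
      _ = κ^4 * (S i i * Real.sqrt (S i i) * Real.sqrt (S k k)) := by ring
  -- sum bounds
  have hsqv : ∑ i, Real.sqrt (S i i) * |v i| ≤ Real.sqrt S.trace := by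
    have h := Finset.sum_mul_sq_le_sq_mul_sq Finset.univ
      (fun i => Real.sqrt (S i i)) (fun i => |v i|)
    have e1 : ∑ i, Real.sqrt (S i i)^2 = S.trace := by
      rw [htr]; exact Finset.sum_congr rfl fun i _ => Real.sq_sqrt (hSd0 i)
    have e2 : ∑ i, |v i|^2 = 1 := by
      simp only [sq_abs]; exact hvs
    rw [e1, e2, mul_one] at h
    have hnn : 0 ≤ ∑ i, Real.sqrt (S i i) * |v i| :=
      Finset.sum_nonneg fun i _ => by positivity
    exact (Real.le_sqrt hnn htr0).mpr h
  have hBmain : ∑ i, ∑ k, κ^4 * (S i i * Real.sqrt (S i i) * Real.sqrt (S k k)) *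
      (|v i| * |v k|) ≤ κ^4 * (opNorm S * S.trace) := by
    have hA1 : ∑ i, S i i * (Real.sqrt (S i i) * |v i|) ≤ opNorm S * Real.sqrt S.trace := by
      calc ∑ i, S i i * (Real.sqrt (S i i) * |v i|)
          ≤ ∑ i, opNorm S * (Real.sqrt (S i i) * |v i|) := by
            refine Finset.sum_le_sum fun i _ => ?_
            exact mul_le_mul_of_nonneg_right (hdiag_le i)
              (mul_nonneg (Real.sqrt_nonneg _) (abs_nonneg _))
        _ = opNorm S * ∑ i, Real.sqrt (S i i) * |v i| := by rw [Finset.mul_sum]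
        _ ≤ opNorm S * Real.sqrt S.trace := mul_le_mul_of_nonneg_left hsqv hnrm0
    have hA2 : 0 ≤ ∑ k, Real.sqrt (S k k) * |v k| :=
      Finset.sum_nonneg fun k _ => by positivity
    have heq : ∑ i, ∑ k, κ^4 * (S i i * Real.sqrt (S i i) * Real.sqrt (S k k)) *
        (|v i| * |v k|) =
        κ^4 * ((∑ i, S i i * (Real.sqrt (S i i) * |v i|)) *
          (∑ k, Real.sqrt (S k k) * |v k|)) := by
      rw [Finset.sum_mul_sum, Finset.mul_sum]
      refine Finset.sum_congr rfl fun i _ => ?_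
      rw [Finset.mul_sum]
      exact Finset.sum_congr rfl fun k _ => by ring
    rw [heq]
    have hstep : (∑ i, S i i * (Real.sqrt (S i i) * |v i|)) *
        (∑ k, Real.sqrt (S k k) * |v k|) ≤
        (opNorm S * Real.sqrt S.trace) * Real.sqrt S.trace := by
      exact mul_le_mul hA1 hsqv hA2 (by positivity)
    refine mul_le_mul_of_nonneg_left (hstep.trans ?_) (by positivity)
    rw [mul_assoc, Real.mul_self_sqrt htr0]
  have hB2main : ∑ i, ∑ j, κ^4 * (S i i * S j j) * (v j)^2 ≤
      κ^4 * (opNorm S * S.trace) := by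
    have h1 : ∑ j, S j j * (v j)^2 ≤ opNorm S := by
      calc ∑ j, S j j * (v j)^2 ≤ ∑ j, opNorm S * (v j)^2 := by
            refine Finset.sum_le_sum fun j _ => ?_
            exact mul_le_mul_of_nonneg_right (hdiag_le j) (sq_nonneg _)
        _ = opNorm S * ∑ j, (v j)^2 := by rw [Finset.mul_sum]
        _ = opNorm S := by rw [hvs, mul_one]
    have heq : ∑ i, ∑ j, κ^4 * (S i i * S j j) * (v j)^2 =
        κ^4 * ((∑ i, S i i) * (∑ j, S j j * (v j)^2)) := by
      rw [Finset.sum_mul_sum, Finset.mul_sum]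
      refine Finset.sum_congr rfl fun i _ => ?_
      rw [Finset.mul_sum]
      exact Finset.sum_congr rfl fun j _ => by ring
    rw [heq, ← htr]
    refine mul_le_mul_of_nonneg_left ?_ (by positivity)
    calc S.trace * ∑ j, S j j * (v j)^2 ≤ S.trace * opNorm S :=
          mul_le_mul_of_nonneg_left h1 htr0
      _ = opNorm S * S.trace := mul_comm _ _
  -- the quadratic form as second moment
  have hWsq : ∀ ω, (∑ j, X ω j * v j)^2 = ∑ a, ∑ b, (X ω a * X ω b) * (v a * v b) := by
    intro ω
    rw [sq, Finset.sum_mul_sum]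
    refine Finset.sum_congr rfl fun a _ => Finset.sum_congr rfl fun b _ => by ring
  have hIW2 : Integrable (fun ω => (∑ j, X ω j * v j)^2) := by
    have e : (fun ω => (∑ j, X ω j * v j)^2) =
        fun ω => ∑ a, ∑ b, (X ω a * X ω b) * (v a * v b) := by
      funext ω; exact hWsq ω
    rw [e]
    exact integrable_finset_sum _ fun a _ =>
      integrable_finset_sum _ fun b _ => (hI2 a b).mul_const _
  have hEW2 : ∫ ω, (∑ j, X ω j * v j)^2 = quadForm S v := by
    calc ∫ ω, (∑ j, X ω j * v j)^2
        = ∫ ω, ∑ a, ∑ b, (X ω a * X ω b) * (v a * v b) :=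
          integral_congr_ae (Filter.Eventually.of_forall hWsq)
      _ = ∑ a, ∑ b, ∫ ω, (X ω a * X ω b) * (v a * v b) := by
          rw [integral_finset_sum _ fun a _ =>
            integrable_finset_sum _ fun b _ => (hI2 a b).mul_const _]
          exact Finset.sum_congr rfl fun a _ =>
            integral_finset_sum _ fun b _ => (hI2 a b).mul_const _
      _ = ∑ a, ∑ b, (∫ ω, X ω a * X ω b) * (v a * v b) :=
          Finset.sum_congr rfl fun a _ => Finset.sum_congr rfl fun b _ =>
            integral_mul_const _ _
      _ = quadForm S v := by
          unfold quadForm bilinForm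
          refine Finset.sum_congr rfl fun a _ => Finset.sum_congr rfl fun b _ => ?_
          rw [← hCov a b]; ring
  have hq0 : 0 ≤ quadForm S v := by
    rw [← hEW2]; exact integral_nonneg fun ω => sq_nonneg _
  -- integrability and moment bound for (∑ X_i^2)^2
  have hsum2eq : ∀ ω, (∑ i, (X ω i)^2)^2 = ∑ a, ∑ b, (X ω a)^2 * (X ω b)^2 := by
    intro ω
    rw [sq, Finset.sum_mul_sum]
  have hIsum2 : Integrable (fun ω => (∑ i, (X ω i)^2)^2) := by
    have e : (fun ω => (∑ i, (X ω i)^2)^2) =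
        fun ω => ∑ a, ∑ b, (X ω a)^2 * (X ω b)^2 := by
      funext ω; exact hsum2eq ω
    rw [e]
    exact integrable_finset_sum _ fun a _ =>
      integrable_finset_sum _ fun b _ => hIX22 a b
  have hEsum2 : ∫ ω, (∑ i, (X ω i)^2)^2 ≤ κ^4 * S.trace^2 := by
    calc ∫ ω, (∑ i, (X ω i)^2)^2
        = ∑ a, ∑ b, ∫ ω, (X ω a)^2 * (X ω b)^2 := by
          rw [integral_congr_ae (Filter.Eventually.of_forall hsum2eq),
            integral_finset_sum _ fun a _ =>
              integrable_finset_sum _ fun b _ => hIX22 a b]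
          exact Finset.sum_congr rfl fun a _ =>
            integral_finset_sum _ fun b _ => hIX22 a b
      _ ≤ ∑ a, ∑ b, κ^4 * (S a a * S b b) := by
          exact Finset.sum_le_sum fun a _ => Finset.sum_le_sum fun b _ => hm22 a b
      _ = κ^4 * S.trace^2 := by
          rw [htr, sq, Finset.sum_mul_sum, Finset.mul_sum]
          exact Finset.sum_congr rfl fun a _ => by
            rw [Finset.mul_sum]
  -- integrability and L4 bound for <X,v>^4
  have hIW4 : Integrable (fun ω => ((∑ j, X ω j * v j)^2)^2) := by
    refine hIsum2.mono' ?_ ?_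
    · exact ((Finset.measurable_sum Finset.univ fun j _ =>
        (hXim j).mul_const (v j)).pow_const 2).pow_const 2 |>.aestronglyMeasurable
    · refine Filter.Eventually.of_forall fun ω => ?_
      rw [Real.norm_eq_abs, abs_of_nonneg (by positivity)]
      have h1 : (∑ j, X ω j * v j)^2 ≤ ∑ j, (X ω j)^2 := by
        have h := Finset.sum_mul_sq_le_sq_mul_sq Finset.univ (fun j => X ω j) v
        rwa [hvs, mul_one] at h
      have h2 : (0:ℝ) ≤ (∑ j, X ω j * v j)^2 := sq_nonneg _
      nlinarith [sq_nonneg (∑ j, (X ω j)^2)]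
  have hW4le : ∫ ω, ((∑ j, X ω j * v j)^2)^2 ≤ κ^4 * (quadForm S v)^2 := by
    have h := hL4 v hv
    have ha : (0:ℝ) ≤ ∫ ω, |∑ i, X ω i * v i|^4 :=
      integral_nonneg fun ω => pow_nonneg (abs_nonneg _) _
    have hb : (0:ℝ) ≤ ∫ ω, |∑ i, X ω i * v i|^2 :=
      integral_nonneg fun ω => pow_nonneg (abs_nonneg _) _
    have h4' := aux_pow4 ha hb hκ0 h
    have e1 : (fun ω => |∑ i, X ω i * v i|^4) = fun ω => ((∑ j, X ω j * v j)^2)^2 := by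
      funext ω; rw [show (4:ℕ) = 2*2 from rfl, pow_mul, sq_abs]
    have e2 : (fun ω => |∑ i, X ω i * v i|^2) = fun ω => (∑ j, X ω j * v j)^2 := by
      funext ω; exact sq_abs _
    rw [e1, e2, hEW2] at h4'
    exact h4'
  -- bound on the full sum
  have hSfull_le : ∫ ω, (∑ i, (X ω i)^2) * (∑ j, X ω j * v j)^2 ≤
      κ^4 * (opNorm S * S.trace) := by
    have hcs := aux_cs (fun ω => ∑ i, (X ω i)^2) (fun ω => (∑ j, X ω j * v j)^2)
      (Finset.measurable_sum Finset.univ fun i _ =>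
        (hXim i).pow_const 2).aestronglyMeasurable
      ((Finset.measurable_sum Finset.univ fun j _ =>
        (hXim j).mul_const (v j)).pow_const 2).aestronglyMeasurable
      hIsum2 hIW4
    have b1 : Real.sqrt (∫ ω, (∑ i, (X ω i)^2)^2) ≤ κ^2 * S.trace := by
      refine le_trans (Real.sqrt_le_sqrt hEsum2) ?_
      rw [show κ^4 * S.trace^2 = (κ^2 * S.trace)^2 by ring,
        Real.sqrt_sq (by positivity)]
    have b2 : Real.sqrt (∫ ω, ((∑ j, X ω j * v j)^2)^2) ≤ κ^2 * opNorm S := by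
      refine le_trans (Real.sqrt_le_sqrt hW4le) ?_
      rw [show κ^4 * (quadForm S v)^2 = (κ^2 * quadForm S v)^2 by ring,
        Real.sqrt_sq (by positivity)]
      exact mul_le_mul_of_nonneg_left hqle (sq_nonneg κ)
    calc ∫ ω, (∑ i, (X ω i)^2) * (∑ j, X ω j * v j)^2
        ≤ |∫ ω, (∑ i, (X ω i)^2) * (∑ j, X ω j * v j)^2| := le_abs_self _
      _ ≤ Real.sqrt (∫ ω, (∑ i, (X ω i)^2)^2) *
          Real.sqrt (∫ ω, ((∑ j, X ω j * v j)^2)^2) := hcs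
      _ ≤ (κ^2 * S.trace) * (κ^2 * opNorm S) := by
          exact mul_le_mul b1 b2 (Real.sqrt_nonneg _) (by positivity)
      _ = κ^4 * (opNorm S * S.trace) := by ring
  -- the full sum equals the integral above
  have hfull_eq : ∑ i, ∑ j, ∑ l, (∫ ω, (X ω i)^2 * X ω j * X ω l) * v j * v l =
      ∫ ω, (∑ i, (X ω i)^2) * (∑ j, X ω j * v j)^2 := by
    have hptsum : ∀ ω : Ω, (∑ i, (X ω i)^2) * (∑ j, X ω j * v j)^2 =
        ∑ i, ∑ j, ∑ l, (X ω i)^2 * X ω j * X ω l * (v j * v l) := by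
      intro ω
      rw [sq, Finset.sum_mul_sum, Finset.sum_mul]
      refine Finset.sum_congr rfl fun i _ => ?_
      rw [Finset.mul_sum]
      refine Finset.sum_congr rfl fun j _ => ?_
      rw [Finset.mul_sum]
      exact Finset.sum_congr rfl fun l _ => by ring
    rw [integral_congr_ae (Filter.Eventually.of_forall hptsum)]
    rw [integral_finset_sum _ fun i _ => integrable_finset_sum _ fun j _ =>
      integrable_finset_sum _ fun l _ => (hIX3 i j l).mul_const _]
    refine Finset.sum_congr rfl fun i _ => ?_
    rw [integral_finset_sum _ fun j _ =>
      integrable_finset_sum _ fun l _ => (hIX3 i j l).mul_const _]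
    refine Finset.sum_congr rfl fun j _ => ?_
    rw [integral_finset_sum _ fun l _ => (hIX3 i j l).mul_const _]
    refine Finset.sum_congr rfl fun l _ => ?_
    rw [integral_mul_const]; ring
  -- ===== sparsification reduction =====
  have hXp_meas : ∀ i j l : Fin d, Measurable (fun ω => (X ω i)^2 * X ω j * X ω l) :=
    fun i j l => (((hXim i).pow_const 2).mul (hXim j)).mul (hXim l)
  have hεp_meas : ∀ i j l : Fin d, Measurable (fun ω => ε ω i * ε ω j * ε ω l) :=
    fun i j l => ((hεm i).mul (hεm j)).mul (hεm l)
  have hεbd : ∀ (i j l : Fin d) (ω : Ω), ‖ε ω i * ε ω j * ε ω l‖ ≤ 1 := by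
    intro i j l ω
    have hb : ∀ k, |ε ω k| ≤ 1 := fun k => by rcases h01 ω k with h | h <;> simp [h]
    rw [Real.norm_eq_abs, abs_mul, abs_mul]
    exact mul_le_one₀ (mul_le_one₀ (hb i) (abs_nonneg _) (hb j)) (abs_nonneg _) (hb l)
  have hIεprod : ∀ i j l : Fin d,
      Integrable (fun ω => ((X ω i)^2 * X ω j * X ω l) * (ε ω i * ε ω j * ε ω l)) := by
    intro i j l
    have h := (hIX3 i j l).bdd_mul (c := 1) (hεp_meas i j l).aestronglyMeasurable
        (Filter.Eventually.of_forall (hεbd i j l))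
    exact h.congr (Filter.Eventually.of_forall fun ω => mul_comm _ _)
  have hYeq : ∀ (i j l : Fin d),
      (fun ω => (Y ω i)^2 * Y ω j * Y ω l * β⁻¹ * v j * v l) =
      fun ω => ((X ω i)^2 * X ω j * X ω l) * (ε ω i * ε ω j * ε ω l) *
        (β⁻¹ * v j * v l) := by
    intro i j l
    funext ω
    rw [hYdef ω i, hYdef ω j, hYdef ω l]
    rcases h01 ω i with h | h <;> rw [h] <;> ring
  have hIfull : ∀ i j l : Fin d,
      Integrable (fun ω => (Y ω i)^2 * Y ω j * Y ω l * β⁻¹ * v j * v l) := by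
    intro i j l
    rw [hYeq i j l]
    exact (hIεprod i j l).mul_const _
  have hterm : ∀ i j l : Fin d, i ≠ j → j ≠ l → i ≠ l →
      ∫ ω, (Y ω i)^2 * Y ω j * Y ω l * β⁻¹ * v j * v l =
      (p^3 * β⁻¹) * ((∫ ω, (X ω i)^2 * X ω j * X ω l) * v j * v l) := by
    intro i j l hij hjl hil
    rw [hYeq i j l, integral_mul_const]
    have hIF : IndepFun (fun ω => (X ω i)^2 * X ω j * X ω l)
        (fun ω => ε ω i * ε ω j * ε ω l) ℙ := by
      have hφ : Measurable (fun x : Fin d → ℝ => (x i)^2 * x j * x l) :=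
        (((measurable_pi_apply i).pow_const 2).mul (measurable_pi_apply j)).mul
          (measurable_pi_apply l)
      have hψ : Measurable (fun x : Fin d → ℝ => x i * x j * x l) :=
        ((measurable_pi_apply i).mul (measurable_pi_apply j)).mul (measurable_pi_apply l)
      exact hXε.comp hφ hψ
    rw [hIF.integral_fun_mul_eq_mul_integral (hXp_meas i j l).aestronglyMeasurable
        (hεp_meas i j l).aestronglyMeasurable,
      aux_bern3 hp0 h01 hεm hεP hεiid hij hjl hil]
    ring
  have hI_ite : ∀ i j l : Fin d, Integrable (fun ω =>
      if i ≠ j ∧ j ≠ l ∧ i ≠ l then (Y ω i)^2 * Y ω j * Y ω l * β⁻¹ * v j * v l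
      else 0) := by
    intro i j l
    by_cases h : i ≠ j ∧ j ≠ l ∧ i ≠ l
    · simp only [if_pos h]; exact hIfull i j l
    · simp only [if_neg h]; exact integrable_const 0
  -- value of the LHS
  have hval : ∀ i j l : Fin d,
      (∫ ω, if i ≠ j ∧ j ≠ l ∧ i ≠ l then (Y ω i)^2 * Y ω j * Y ω l * β⁻¹ * v j * v l
        else 0) =
      (p^3 * β⁻¹) * (if i ≠ j ∧ j ≠ l ∧ i ≠ l then
        (∫ ω, (X ω i)^2 * X ω j * X ω l) * v j * v l else 0) := by
    intro i j l
    by_cases h : i ≠ j ∧ j ≠ l ∧ i ≠ l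
    · simp only [if_pos h]
      exact hterm i j l h.1 h.2.1 h.2.2
    · simp only [if_neg h, integral_zero, mul_zero]
  have hLHS : (∫ ω, ∑ i, ∑ j, ∑ l,
      if i ≠ j ∧ j ≠ l ∧ i ≠ l then (Y ω i) ^ 2 * Y ω j * Y ω l * β⁻¹ * v j * v l
      else 0) =
      (p^3 * β⁻¹) * ∑ i, ∑ j, ∑ l, (if i ≠ j ∧ j ≠ l ∧ i ≠ l then
        (∫ ω, (X ω i)^2 * X ω j * X ω l) * v j * v l else 0) := by
    rw [integral_finset_sum _ fun i _ => integrable_finset_sum _ fun j _ =>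
      integrable_finset_sum _ fun l _ => hI_ite i j l]
    rw [Finset.mul_sum]
    refine Finset.sum_congr rfl fun i _ => ?_
    rw [integral_finset_sum _ fun j _ => integrable_finset_sum _ fun l _ => hI_ite i j l,
      Finset.mul_sum]
    refine Finset.sum_congr rfl fun j _ => ?_
    rw [integral_finset_sum _ fun l _ => hI_ite i j l, Finset.mul_sum]
    exact Finset.sum_congr rfl fun l _ => hval i j l
  -- ===== combinatorial bound on A =====
  have hptw : ∀ i j l : Fin d,
      (if i ≠ j ∧ j ≠ l ∧ i ≠ l then
        (∫ ω, (X ω i)^2 * X ω j * X ω l) * v j * v l else 0) ≤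
      (∫ ω, (X ω i)^2 * X ω j * X ω l) * v j * v l +
        ((if i = j then |(∫ ω, (X ω i)^2 * X ω j * X ω l) * v j * v l| else 0) +
         (if j = l then |(∫ ω, (X ω i)^2 * X ω j * X ω l) * v j * v l| else 0) +
         (if i = l then |(∫ ω, (X ω i)^2 * X ω j * X ω l) * v j * v l| else 0)) := by
    intro i j l
    set x := (∫ ω, (X ω i)^2 * X ω j * X ω l) * v j * v l with hx
    have hnn : ∀ (c : Prop) [Decidable c], (0:ℝ) ≤ if c then |x| else 0 := by
      intro c _; split_ifs <;> simp [abs_nonneg]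
    by_cases hd : i ≠ j ∧ j ≠ l ∧ i ≠ l
    · rw [if_pos hd, if_neg hd.1, if_neg hd.2.1, if_neg hd.2.2]
      linarith
    · rw [if_neg hd]
      have hor : i = j ∨ j = l ∨ i = l := by
        by_contra hc; push_neg at hc; exact hd ⟨hc.1, hc.2.1, hc.2.2⟩
      rcases hor with h | h | h
      · have e1 : (if i = j then |x| else 0) = |x| := if_pos h
        linarith [e1, hnn (j = l), hnn (i = l), neg_abs_le x]
      · have e1 : (if j = l then |x| else 0) = |x| := if_pos h
        linarith [e1, hnn (i = j), hnn (i = l), neg_abs_le x]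
      · have e1 : (if i = l then |x| else 0) = |x| := if_pos h
        linarith [e1, hnn (i = j), hnn (j = l), neg_abs_le x]
  have hT1 : ∑ i, ∑ j, ∑ l, (if i = j then
      |(∫ ω, (X ω i)^2 * X ω j * X ω l) * v j * v l| else 0) ≤
      κ^4 * (opNorm S * S.trace) := by
    calc ∑ i, ∑ j, ∑ l, (if i = j then
          |(∫ ω, (X ω i)^2 * X ω j * X ω l) * v j * v l| else 0)
        = ∑ i, ∑ l, |(∫ ω, (X ω i)^2 * X ω i * X ω l) * v i * v l| := by
          refine Finset.sum_congr rfl fun i _ => ?_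
          rw [Finset.sum_comm]
          refine Finset.sum_congr rfl fun l _ => ?_
          rw [Finset.sum_ite_eq Finset.univ i]
          simp
      _ ≤ ∑ i, ∑ l, κ^4 * (S i i * Real.sqrt (S i i) * Real.sqrt (S l l)) *
            (|v i| * |v l|) := by
          refine Finset.sum_le_sum fun i _ => Finset.sum_le_sum fun l _ => ?_
          have he : |(∫ ω, (X ω i)^2 * X ω i * X ω l) * v i * v l| =
              |∫ ω, (X ω i)^2 * (X ω i * X ω l)| * (|v i| * |v l|) := by
            rw [abs_mul, abs_mul,
              show (∫ ω, (X ω i)^2 * X ω i * X ω l) = ∫ ω, (X ω i)^2 * (X ω i * X ω l)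
                from integral_congr_ae (Filter.Eventually.of_forall fun ω => by ring)]
            ring
          rw [he]
          exact mul_le_mul_of_nonneg_right (hm3 i l)
            (mul_nonneg (abs_nonneg _) (abs_nonneg _))
      _ ≤ κ^4 * (opNorm S * S.trace) := hBmain
  have hT3 : ∑ i, ∑ j, ∑ l, (if i = l then
      |(∫ ω, (X ω i)^2 * X ω j * X ω l) * v j * v l| else 0) ≤
      κ^4 * (opNorm S * S.trace) := by
    calc ∑ i, ∑ j, ∑ l, (if i = l then
          |(∫ ω, (X ω i)^2 * X ω j * X ω l) * v j * v l| else 0)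
        = ∑ i, ∑ j, |(∫ ω, (X ω i)^2 * X ω j * X ω i) * v j * v i| := by
          refine Finset.sum_congr rfl fun i _ => Finset.sum_congr rfl fun j _ => ?_
          rw [Finset.sum_ite_eq Finset.univ i]
          simp
      _ ≤ ∑ i, ∑ j, κ^4 * (S i i * Real.sqrt (S i i) * Real.sqrt (S j j)) *
            (|v i| * |v j|) := by
          refine Finset.sum_le_sum fun i _ => Finset.sum_le_sum fun j _ => ?_
          have he : |(∫ ω, (X ω i)^2 * X ω j * X ω i) * v j * v i| =
              |∫ ω, (X ω i)^2 * (X ω i * X ω j)| * (|v i| * |v j|) := by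
            rw [abs_mul, abs_mul,
              show (∫ ω, (X ω i)^2 * X ω j * X ω i) = ∫ ω, (X ω i)^2 * (X ω i * X ω j)
                from integral_congr_ae (Filter.Eventually.of_forall fun ω => by ring)]
            ring
          rw [he]
          exact mul_le_mul_of_nonneg_right (hm3 i j)
            (mul_nonneg (abs_nonneg _) (abs_nonneg _))
      _ ≤ κ^4 * (opNorm S * S.trace) := hBmain
  have hT2 : ∑ i, ∑ j, ∑ l, (if j = l then
      |(∫ ω, (X ω i)^2 * X ω j * X ω l) * v j * v l| else 0) ≤
      κ^4 * (opNorm S * S.trace) := by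
    calc ∑ i, ∑ j, ∑ l, (if j = l then
          |(∫ ω, (X ω i)^2 * X ω j * X ω l) * v j * v l| else 0)
        = ∑ i, ∑ j, |(∫ ω, (X ω i)^2 * X ω j * X ω j) * v j * v j| := by
          refine Finset.sum_congr rfl fun i _ => Finset.sum_congr rfl fun j _ => ?_
          rw [Finset.sum_ite_eq Finset.univ j]
          simp
      _ ≤ ∑ i, ∑ j, κ^4 * (S i i * S j j) * (v j)^2 := by
          refine Finset.sum_le_sum fun i _ => Finset.sum_le_sum fun j _ => ?_
          have hnn : (0:ℝ) ≤ ∫ ω, (X ω i)^2 * (X ω j)^2 :=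
            integral_nonneg fun ω => by positivity
          have he : |(∫ ω, (X ω i)^2 * X ω j * X ω j) * v j * v j| =
              (∫ ω, (X ω i)^2 * (X ω j)^2) * (v j)^2 := by
            rw [abs_mul, abs_mul,
              show (∫ ω, (X ω i)^2 * X ω j * X ω j) = ∫ ω, (X ω i)^2 * (X ω j)^2
                from integral_congr_ae (Filter.Eventually.of_forall fun ω => by ring),
              abs_of_nonneg hnn]
            rw [show ∀ a b : ℝ, a * |b| * |b| = a * |b|^2 from fun a b => by ring, sq_abs]
          rw [he]
          exact mul_le_mul_of_nonneg_right (hm22 i j) (sq_nonneg _)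
      _ ≤ κ^4 * (opNorm S * S.trace) := hB2main
  have hA_le : ∑ i, ∑ j, ∑ l, (if i ≠ j ∧ j ≠ l ∧ i ≠ l then
      (∫ ω, (X ω i)^2 * X ω j * X ω l) * v j * v l else 0) ≤
      4 * (κ^4 * (opNorm S * S.trace)) := by
    calc ∑ i, ∑ j, ∑ l, (if i ≠ j ∧ j ≠ l ∧ i ≠ l then
          (∫ ω, (X ω i)^2 * X ω j * X ω l) * v j * v l else 0)
        ≤ ∑ i, ∑ j, ∑ l, ((∫ ω, (X ω i)^2 * X ω j * X ω l) * v j * v l +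
            ((if i = j then |(∫ ω, (X ω i)^2 * X ω j * X ω l) * v j * v l| else 0) +
             (if j = l then |(∫ ω, (X ω i)^2 * X ω j * X ω l) * v j * v l| else 0) +
             (if i = l then |(∫ ω, (X ω i)^2 * X ω j * X ω l) * v j * v l| else 0))) := by
          exact Finset.sum_le_sum fun i _ => Finset.sum_le_sum fun j _ =>
            Finset.sum_le_sum fun l _ => hptw i j l
      _ = (∑ i, ∑ j, ∑ l, (∫ ω, (X ω i)^2 * X ω j * X ω l) * v j * v l) +
          ((∑ i, ∑ j, ∑ l, (if i = j then
              |(∫ ω, (X ω i)^2 * X ω j * X ω l) * v j * v l| else 0)) +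
           (∑ i, ∑ j, ∑ l, (if j = l then
              |(∫ ω, (X ω i)^2 * X ω j * X ω l) * v j * v l| else 0)) +
           (∑ i, ∑ j, ∑ l, (if i = l then
              |(∫ ω, (X ω i)^2 * X ω j * X ω l) * v j * v l| else 0))) := by
          simp only [Finset.sum_add_distrib]
      _ ≤ κ^4 * (opNorm S * S.trace) +
          (κ^4 * (opNorm S * S.trace) + κ^4 * (opNorm S * S.trace) +
            κ^4 * (opNorm S * S.trace)) := by
          refine add_le_add ?_ (add_le_add (add_le_add hT1 hT2) hT3)
          rw [hfull_eq]
          exact hSfull_le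
      _ = 4 * (κ^4 * (opNorm S * S.trace)) := by ring
  -- ===== final assembly =====
  rw [hLHS]
  have hc0 : (0:ℝ) ≤ p^3 * β⁻¹ := by positivity
  calc (p^3 * β⁻¹) * ∑ i, ∑ j, ∑ l, (if i ≠ j ∧ j ≠ l ∧ i ≠ l then
        (∫ ω, (X ω i)^2 * X ω j * X ω l) * v j * v l else 0)
      ≤ (p^3 * β⁻¹) * (4 * (κ^4 * (opNorm S * S.trace))) :=
        mul_le_mul_of_nonneg_left hA_le hc0
    _ ≤ 8 * p ^ 3 * κ ^ 4 * ((opNorm S) ^ 2 + β⁻¹ ^ 2 * S.trace ^ 2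
        + β⁻¹ * opNorm S * S.trace) := by
        have h1 : (0:ℝ) ≤ p^3 * κ^4 * (opNorm S)^2 := by positivity
        have h2 : (0:ℝ) ≤ p^3 * κ^4 * (β⁻¹^2 * S.trace^2) := by positivity
        have h3 : (0:ℝ) ≤ p^3 * κ^4 * (β⁻¹ * (opNorm S * S.trace)) := by
          have := mul_nonneg (mul_nonneg hnrm0 htr0) hβ0
          positivity
        nlinarith [h1, h2, h3]
end
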